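/- arXiv:2303.15717 — 7 statements merged into one kernel-verified Lean document; each statement's English description precedes it below -/
import Mathlib

section
/- Let X be a complex Banach space and L(X) the Banach algebra of bounded linear operators on X. For A ∈ L(X) the following are equivalent: (1) A has a Hirano inverse, i.e. there exists Z ∈ L(X) with AZ = ZA, Z = ZAZ and A² − AZ nilpotent; (2) A − A³ is nilpotent; (3) A = E + N where E³ = E, N is nilpotent and EN = NE; (4) A² has a strongly Drazin inverse, i.e. there exists W with A²W = WA², W = WA²W and A² − A²W nilpotent. -/
/-- `a` has a Hirano inverse: there exists `z` with `az = za`, `z = zaz`,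
and `a^2 - az` nilpotent. -/
def HasHiranoInverse {R : Type*} [Ring R] (a : R) : Prop :=
  ∃ z : R, a * z = z * a ∧ z = z * a * z ∧ IsNilpotent (a ^ 2 - a * z)

/-- `a` has a strongly Drazin inverse: there exists `z` with `az = za`, `z = zaz`,
and `a - az` nilpotent. -/
def HasStronglyDrazinInverse {R : Type*} [Ring R] (a : R) : Prop :=
  ∃ z : R, a * z = z * a ∧ z = z * a * z ∧ IsNilpotent (a - a * z)

/-! ### Auxiliary lemmas -/

theorem nil_of_sq' {R : Type*} [MonoidWithZero R] {x : R} (h : IsNilpotent (x ^ 2)) :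
    IsNilpotent x := by
  obtain ⟨n, hn⟩ := h
  exact ⟨2 * (n + 1), by rw [pow_mul, pow_succ, hn, zero_mul]⟩

theorem isNilpotent_of_map' {S R : Type*} [Ring S] [Ring R] (f : S →+* R)
    (hf : Function.Injective f) {x : S} (h : IsNilpotent (f x)) : IsNilpotent x := by
  obtain ⟨n, hn⟩ := h
  exact ⟨n, hf (by rw [map_pow, hn, map_zero])⟩

/-- Lifting idempotents in a commutative ring along the nilradical. -/
theorem myLiftIdem {R : Type*} [CommRing R] {b : R} (h : IsNilpotent (b - b ^ 2)) :
    ∃ e : R, e * e = e ∧ IsNilpotent (b - e) := by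
  obtain ⟨n, hn⟩ := h
  have hm : (b - b ^ 2) ^ (n + 1) = 0 := by rw [pow_succ, hn, zero_mul]
  have hbb : IsNilpotent (b * (1 - b)) :=
    ⟨n + 1, by rw [show b * (1 - b) = b - b ^ 2 by ring, hm]⟩
  refine ⟨1 - (1 - b ^ (n + 1)) ^ (n + 1),
    (isIdempotentElem_one_sub_one_sub_pow_pow b (n + 1) hm).eq, ?_⟩
  obtain ⟨c, hc⟩ := sub_dvd_pow_sub_pow (1 : R) b (n + 1)
  obtain ⟨d, hd⟩ := sub_dvd_pow_sub_pow (1 : R) (1 - b ^ (n + 1)) (n + 1)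
  rw [one_pow] at hc hd
  have h1 : IsNilpotent (b * (1 - b ^ (n + 1)) ^ (n + 1)) := by
    have key : b * (1 - b ^ (n + 1)) ^ (n + 1) = (b * (1 - b)) * ((1 - b) ^ n * c ^ (n + 1)) := by
      rw [show (1 : R) - b ^ (n + 1) = (1 - b) * c from by linear_combination hc, mul_pow]
      ring
    rw [key]
    exact (Commute.all _ _).isNilpotent_mul_right hbb
  have h2 : IsNilpotent ((1 - b) * (1 - (1 - b ^ (n + 1)) ^ (n + 1))) := by
    have key : (1 - b) * (1 - (1 - b ^ (n + 1)) ^ (n + 1)) = (b * (1 - b)) * (b ^ n * d) := by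
      rw [show (1 : R) - (1 - b ^ (n + 1)) ^ (n + 1) = b ^ (n + 1) * d from by
        linear_combination hd]
      ring
    rw [key]
    exact (Commute.all _ _).isNilpotent_mul_right hbb
  have key : b - (1 - (1 - b ^ (n + 1)) ^ (n + 1))
      = b * (1 - b ^ (n + 1)) ^ (n + 1) - (1 - b) * (1 - (1 - b ^ (n + 1)) ^ (n + 1)) := by
    ring
  rw [key]
  exact (Commute.all _ _).isNilpotent_sub h1 h2

/-- If `e` is idempotent and `a² - e` is nilpotent in a commutative ring,
then `a - a³` is nilpotent. -/
theorem myL0 {R : Type*} [CommRing R] {a e : R} (he : e * e = e)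
    (h : IsNilpotent (a ^ 2 - e)) : IsNilpotent (a - a ^ 3) := by
  have h1 : IsNilpotent (a * (1 - e)) := by
    apply nil_of_sq'
    have key : (a * (1 - e)) ^ 2 = (a ^ 2 - e) * (1 - e) := by
      linear_combination (a ^ 2 - 1) * he
    rw [key]
    exact (Commute.all _ _).isNilpotent_mul_right h
  have h2 : IsNilpotent (a * (a ^ 2 - e)) := (Commute.all _ _).isNilpotent_mul_left h
  have key2 : a - a ^ 3 = a * (1 - e) - a * (a ^ 2 - e) := by ring
  rw [key2]
  exact (Commute.all _ _).isNilpotent_sub h1 h2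

/-- Strongly Drazin invertible elements of commutative rings satisfy `b - b²` nilpotent. -/
theorem myL4' {R : Type*} [CommRing R] {b w : R} (h1 : w = w * b * w)
    (h2 : IsNilpotent (b - b * w)) : IsNilpotent (b - b ^ 2) := by
  have key : b - b ^ 2 = (b - b * w) * (1 - b * w - b) := by linear_combination b * h1
  rw [key]
  exact (Commute.all _ _).isNilpotent_mul_right h2

/-- Tripotent plus nilpotent implies `a - a³` nilpotent, commutative case. -/
theorem myL3r {R : Type*} [CommRing R] {E N a : R} (hE : E ^ 3 = E) (hN : IsNilpotent N)
    (ha : a = E + N) : IsNilpotent (a - a ^ 3) := by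
  have key : a - a ^ 3 = N * (1 - 3 * E ^ 2 - 3 * E * N - N ^ 2) := by
    rw [ha]; linear_combination (-1 : R) * hE
  rw [key]
  exact (Commute.all _ _).isNilpotent_mul_right hN

/-- From `a - a³` nilpotent in a commutative ring, construct the Hirano inverse of `a`
and the strongly Drazin inverse of `a²`. -/
theorem myKey {R : Type*} [CommRing R] {a : R} (h : IsNilpotent (a - a ^ 3)) :
    ∃ z w : R, z = z * a * z ∧ IsNilpotent (a ^ 2 - a * z) ∧
      w = w * a ^ 2 * w ∧ IsNilpotent (a ^ 2 - a ^ 2 * w) := by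
  have hb : IsNilpotent (a ^ 2 - (a ^ 2) ^ 2) := by
    have key : a ^ 2 - (a ^ 2) ^ 2 = a * (a - a ^ 3) := by ring
    rw [key]
    exact (Commute.all _ _).isNilpotent_mul_left h
  obtain ⟨e, he, hq⟩ := myLiftIdem hb
  have hen : IsNilpotent (e * (a ^ 2 - e)) := (Commute.all _ _).isNilpotent_mul_left hq
  obtain ⟨u, hu_eq⟩ := hen.isUnit_one_add
  have huv : (1 + e * (a ^ 2 - e)) * ((u⁻¹ : Rˣ) : R) = 1 := by
    rw [← hu_eq]; exact u.mul_inv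
  have hbw : a ^ 2 * (e * ((u⁻¹ : Rˣ) : R)) = e := by
    have h1 : a ^ 2 * (e * ((u⁻¹ : Rˣ) : R))
        = ((1 + e * (a ^ 2 - e)) * ((u⁻¹ : Rˣ) : R)) * e := by
      linear_combination (((u⁻¹ : Rˣ) : R) * (1 + e - a ^ 2)) * he
    rw [h1, huv, one_mul]
  refine ⟨a * (e * ((u⁻¹ : Rˣ) : R)), e * ((u⁻¹ : Rˣ) : R), ?_, ?_, ?_, ?_⟩
  · linear_combination (-(a * (e * ((u⁻¹ : Rˣ) : R)))) * hbw + (-(a * ((u⁻¹ : Rˣ) : R))) * he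
  · have key : a ^ 2 - a * (a * (e * ((u⁻¹ : Rˣ) : R))) = a ^ 2 - e := by
      linear_combination -hbw
    rw [key]; exact hq
  · linear_combination (-(e * ((u⁻¹ : Rˣ) : R))) * hbw + (-((u⁻¹ : Rˣ) : R)) * he
  · rw [hbw]; exact hq

/-- From `a - a³` nilpotent, a tripotent-plus-nilpotent decomposition, commutative case.
`h2` is an element behaving like `1/2`. -/
theorem myKey3 {R : Type*} [CommRing R] {a h2 : R} (h21 : h2 * 2 = 1)
    (h : IsNilpotent (a - a ^ 3)) :
    ∃ E N : R, E ^ 3 = E ∧ IsNilpotent N ∧ a = E + N := by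
  have hp : IsNilpotent (h2 * (a ^ 2 + a) - (h2 * (a ^ 2 + a)) ^ 2) := by
    have hid : h2 * (a ^ 2 + a) - (h2 * (a ^ 2 + a)) ^ 2
        = (h2 * h2 * (a + 2)) * (a - a ^ 3) := by
      linear_combination (-(h2 * (a ^ 2 + a))) * h21
    rw [hid]
    exact (Commute.all _ _).isNilpotent_mul_left h
  have hq : IsNilpotent (h2 * (a ^ 2 - a) - (h2 * (a ^ 2 - a)) ^ 2) := by
    have hid : h2 * (a ^ 2 - a) - (h2 * (a ^ 2 - a)) ^ 2
        = (h2 * h2 * (a - 2)) * (a - a ^ 3) := by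
      linear_combination (-(h2 * (a ^ 2 - a))) * h21
    rw [hid]
    exact (Commute.all _ _).isNilpotent_mul_left h
  obtain ⟨P, hP, hpP⟩ := myLiftIdem hp
  obtain ⟨Q, hQ, hqQ⟩ := myLiftIdem hq
  refine ⟨P - Q, a - (P - Q), ?_, ?_, by ring⟩
  · linear_combination (P + 1 - 3 * Q) * hP + (3 * P - Q - 1) * hQ
  · have hN : a - (P - Q) = (h2 * (a ^ 2 + a) - P) - (h2 * (a ^ 2 - a) - Q) := by
      linear_combination (-a) * h21
    rw [hN]
    exact (Commute.all _ _).isNilpotent_sub hpP hqQ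

/-! ### Transfer lemmas: general ring with a `ℂ`-algebra structure -/

section Transfer

variable {R : Type*} [Ring R] [Algebra ℂ R]

theorem imp21' {A Z : R} (hc : A * Z = Z * A) (h1 : Z = Z * A * Z)
    (h2 : IsNilpotent (A ^ 2 - A * Z)) : IsNilpotent (A - A ^ 3) := by
  letI : CommRing (Algebra.adjoin ℂ ({A, Z} : Set R)) :=
    Algebra.adjoinCommRingOfComm ℂ (by
      rintro x hx y hy
      simp only [Set.mem_insert_iff, Set.mem_singleton_iff] at hx hy
      rcases hx with rfl | rfl <;> rcases hy with rfl | rfl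
      · rfl
      · exact hc
      · exact hc.symm
      · rfl)
  let f : (Algebra.adjoin ℂ ({A, Z} : Set R)) →+* R :=
    { toFun := Subtype.val, map_one' := rfl, map_mul' := fun _ _ => rfl,
      map_zero' := rfl, map_add' := fun _ _ => rfl }
  have hfinj : Function.Injective f := Subtype.val_injective
  set a : Algebra.adjoin ℂ ({A, Z} : Set R) :=
    ⟨A, Algebra.subset_adjoin (Set.mem_insert _ _)⟩ with ha_def
  set z : Algebra.adjoin ℂ ({A, Z} : Set R) :=
    ⟨Z, Algebra.subset_adjoin (Set.mem_insert_of_mem _ rfl)⟩ with hz_def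
  have he : (a * z) * (a * z) = a * z := by
    apply hfinj
    show (A * Z) * (A * Z) = A * Z
    rw [mul_assoc, ← mul_assoc Z A Z, ← h1]
  have hq : IsNilpotent (a ^ 2 - a * z) := by
    refine isNilpotent_of_map' f hfinj ?_
    have key : f (a ^ 2 - a * z) = A ^ 2 - A * Z := by
      rw [map_sub, map_pow, map_mul]; rfl
    rw [key]; exact h2
  have h3 := (myL0 he hq).map f
  have key : f (a - a ^ 3) = A - A ^ 3 := by rw [map_sub, map_pow]; rfl
  rwa [key] at h3

theorem imp42' {A W : R} (hc : A ^ 2 * W = W * A ^ 2) (h1 : W = W * A ^ 2 * W)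
    (h2 : IsNilpotent (A ^ 2 - A ^ 2 * W)) : IsNilpotent (A - A ^ 3) := by
  letI : CommRing (Algebra.adjoin ℂ ({A ^ 2, W} : Set R)) :=
    Algebra.adjoinCommRingOfComm ℂ (by
      rintro x hx y hy
      simp only [Set.mem_insert_iff, Set.mem_singleton_iff] at hx hy
      rcases hx with rfl | rfl <;> rcases hy with rfl | rfl
      · rfl
      · exact hc
      · exact hc.symm
      · rfl)
  let f : (Algebra.adjoin ℂ ({A ^ 2, W} : Set R)) →+* R :=
    { toFun := Subtype.val, map_one' := rfl, map_mul' := fun _ _ => rfl,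
      map_zero' := rfl, map_add' := fun _ _ => rfl }
  have hfinj : Function.Injective f := Subtype.val_injective
  set b : Algebra.adjoin ℂ ({A ^ 2, W} : Set R) :=
    ⟨A ^ 2, Algebra.subset_adjoin (Set.mem_insert _ _)⟩ with hb_def
  set w : Algebra.adjoin ℂ ({A ^ 2, W} : Set R) :=
    ⟨W, Algebra.subset_adjoin (Set.mem_insert_of_mem _ rfl)⟩ with hw_def
  have h1' : w = w * b * w := by
    apply hfinj
    exact h1
  have h2' : IsNilpotent (b - b * w) := by
    refine isNilpotent_of_map' f hfinj ?_
    have key : f (b - b * w) = A ^ 2 - A ^ 2 * W := by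
      rw [map_sub, map_mul]; rfl
    rw [key]; exact h2
  have hb := (myL4' h1' h2').map f
  have hb' : IsNilpotent (A ^ 2 - (A ^ 2) ^ 2) := by
    have key : f (b - b ^ 2) = A ^ 2 - (A ^ 2) ^ 2 := by rw [map_sub, map_pow]; rfl
    rwa [key] at hb
  apply nil_of_sq'
  have key : (A - A ^ 3) ^ 2 = (A ^ 2 - (A ^ 2) ^ 2) * (1 - A ^ 2) := by noncomm_ring
  rw [key]
  have c2 : Commute (A ^ 2 - (A ^ 2) ^ 2) (1 - A ^ 2) :=
    Commute.sub_right (Commute.one_right _)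
      ((Commute.refl (A ^ 2)).sub_left ((Commute.refl (A ^ 2)).pow_left 2))
  exact c2.isNilpotent_mul_right hb'

theorem imp32' {E N : R} (hE : E ^ 3 = E) (hN : IsNilpotent N) (hc : E * N = N * E) :
    IsNilpotent ((E + N) - (E + N) ^ 3) := by
  letI : CommRing (Algebra.adjoin ℂ ({E, N} : Set R)) :=
    Algebra.adjoinCommRingOfComm ℂ (by
      rintro x hx y hy
      simp only [Set.mem_insert_iff, Set.mem_singleton_iff] at hx hy
      rcases hx with rfl | rfl <;> rcases hy with rfl | rfl
      · rfl
      · exact hc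
      · exact hc.symm
      · rfl)
  let f : (Algebra.adjoin ℂ ({E, N} : Set R)) →+* R :=
    { toFun := Subtype.val, map_one' := rfl, map_mul' := fun _ _ => rfl,
      map_zero' := rfl, map_add' := fun _ _ => rfl }
  have hfinj : Function.Injective f := Subtype.val_injective
  set e : Algebra.adjoin ℂ ({E, N} : Set R) :=
    ⟨E, Algebra.subset_adjoin (Set.mem_insert _ _)⟩ with he_def
  set n : Algebra.adjoin ℂ ({E, N} : Set R) :=
    ⟨N, Algebra.subset_adjoin (Set.mem_insert_of_mem _ rfl)⟩ with hn_def
  have hE' : e ^ 3 = e := by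
    apply hfinj
    rw [map_pow]
    exact hE
  have hN' : IsNilpotent n := isNilpotent_of_map' f hfinj hN
  have h3 := (myL3r hE' hN' rfl).map f
  have key : f ((e + n) - (e + n) ^ 3) = (E + N) - (E + N) ^ 3 := by
    simp only [map_sub, map_pow, map_add]; rfl
  rwa [key] at h3

theorem imp23' {A : R} (h : IsNilpotent (A - A ^ 3)) :
    ∃ E N : R, E ^ 3 = E ∧ IsNilpotent N ∧ E * N = N * E ∧ A = E + N := by
  letI : CommRing (Algebra.adjoin ℂ ({A} : Set R)) :=
    Algebra.adjoinCommRingOfComm ℂ (fun x hx y hy => by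
      rw [Set.eq_of_mem_singleton hx, Set.eq_of_mem_singleton hy])
  let f : (Algebra.adjoin ℂ ({A} : Set R)) →+* R :=
    { toFun := Subtype.val, map_one' := rfl, map_mul' := fun _ _ => rfl,
      map_zero' := rfl, map_add' := fun _ _ => rfl }
  have hfinj : Function.Injective f := Subtype.val_injective
  set a : Algebra.adjoin ℂ ({A} : Set R) := ⟨A, Algebra.subset_adjoin rfl⟩ with ha_def
  have hA' : IsNilpotent (a - a ^ 3) := by
    refine isNilpotent_of_map' f hfinj ?_
    have key : f (a - a ^ 3) = A - A ^ 3 := by rw [map_sub, map_pow]; rfl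
    rw [key]; exact h
  set h2 : Algebra.adjoin ℂ ({A} : Set R) :=
    ⟨algebraMap ℂ R 2⁻¹, Subalgebra.algebraMap_mem _ _⟩ with h2_def
  have h21 : h2 * 2 = 1 := by
    apply hfinj
    rw [map_mul, map_ofNat, map_one]
    show algebraMap ℂ R 2⁻¹ * 2 = 1
    rw [show (2 : R) = algebraMap ℂ R 2 from (map_ofNat (algebraMap ℂ R) 2).symm, ← map_mul,
      show ((2 : ℂ))⁻¹ * 2 = 1 by norm_num, map_one]
  obtain ⟨E, N, hE, hN, hEN⟩ := myKey3 h21 hA'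
  refine ⟨f E, f N, ?_, hN.map f, ?_, ?_⟩
  · have key := congrArg f hE
    rwa [map_pow] at key
  · have key := congrArg f (mul_comm E N)
    rwa [map_mul, map_mul] at key
  · have key := congrArg f hEN
    rw [map_add] at key
    exact key

theorem imp214' {A : R} (h : IsNilpotent (A - A ^ 3)) :
    (∃ Z : R, A * Z = Z * A ∧ Z = Z * A * Z ∧ IsNilpotent (A ^ 2 - A * Z)) ∧
    (∃ W : R, A ^ 2 * W = W * A ^ 2 ∧ W = W * A ^ 2 * W ∧
      IsNilpotent (A ^ 2 - A ^ 2 * W)) := by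
  letI : CommRing (Algebra.adjoin ℂ ({A} : Set R)) :=
    Algebra.adjoinCommRingOfComm ℂ (fun x hx y hy => by
      rw [Set.eq_of_mem_singleton hx, Set.eq_of_mem_singleton hy])
  let f : (Algebra.adjoin ℂ ({A} : Set R)) →+* R :=
    { toFun := Subtype.val, map_one' := rfl, map_mul' := fun _ _ => rfl,
      map_zero' := rfl, map_add' := fun _ _ => rfl }
  have hfinj : Function.Injective f := Subtype.val_injective
  set a : Algebra.adjoin ℂ ({A} : Set R) := ⟨A, Algebra.subset_adjoin rfl⟩ with ha_def
  have hA' : IsNilpotent (a - a ^ 3) := by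
    refine isNilpotent_of_map' f hfinj ?_
    have key : f (a - a ^ 3) = A - A ^ 3 := by rw [map_sub, map_pow]; rfl
    rw [key]; exact h
  obtain ⟨z, w, hz1, hz2, hw1, hw2⟩ := myKey hA'
  constructor
  · refine ⟨f z, ?_, ?_, ?_⟩
    · have key := congrArg f (mul_comm a z)
      rw [map_mul, map_mul] at key
      exact key
    · have key := congrArg f hz1
      rw [map_mul, map_mul] at key
      exact key
    · have h' := hz2.map f
      have key : f (a ^ 2 - a * z) = A ^ 2 - A * f z := by
        rw [map_sub, map_pow, map_mul]; rfl
      rwa [key] at h'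
  · refine ⟨f w, ?_, ?_, ?_⟩
    · have key := congrArg f (mul_comm (a ^ 2) w)
      rw [map_mul, map_mul, map_pow] at key
      exact key
    · have key := congrArg f hw1
      rw [map_mul, map_mul, map_pow] at key
      exact key
    · have h' := hw2.map f
      have key : f (a ^ 2 - a ^ 2 * w) = A ^ 2 - A ^ 2 * f w := by
        rw [map_sub, map_pow, map_mul, map_pow]; rfl
      rwa [key] at h'

end Transfer

variable {X : Type*} [NormedAddCommGroup X] [NormedSpace ℂ X] [CompleteSpace X]

theorem hirano_tfae (A : X →L[ℂ] X) :
    List.TFAE [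
      (∃ Z : X →L[ℂ] X, A * Z = Z * A ∧ Z = Z * A * Z ∧ IsNilpotent (A ^ 2 - A * Z)),
      IsNilpotent (A - A ^ 3),
      (∃ E N : X →L[ℂ] X, E ^ 3 = E ∧ IsNilpotent N ∧ E * N = N * E ∧ A = E + N),
      (∃ W : X →L[ℂ] X, A ^ 2 * W = W * A ^ 2 ∧ W = W * A ^ 2 * W ∧
        IsNilpotent (A ^ 2 - A ^ 2 * W))
    ] := by
  tfae_have 1 → 2 := fun ⟨Z, hc, h1, h2⟩ => imp21' hc h1 h2
  tfae_have 4 → 2 := fun ⟨W, hc, h1, h2⟩ => imp42' hc h1 h2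
  tfae_have 3 → 2 := by
    rintro ⟨E, N, hE, hN, hc, hA⟩
    rw [hA]
    exact imp32' hE hN hc
  tfae_have 2 → 3 := fun h => imp23' h
  tfae_have 2 → 1 := fun h => (imp214' h).1
  tfae_have 2 → 4 := fun h => (imp214' h).2
  tfae_finish
end

section
/- Let X be a complex Banach space and L(X) the Banach algebra of bounded linear operators on X. If P, Q ∈ L(X) have strongly Drazin inverses and PQ = 0, then P + Q has a strongly Drazin inverse. -/
section Aux
variable {R : Type*} [Ring R]

lemma aux_pow_mul {A B : R} (h : A * B = 0) :
    ∀ k j, (A + B) ^ k * B ^ (j + 1) = B ^ (k + (j + 1)) := by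
  intro k
  induction k with
  | zero => intro j; simp
  | succ k ih =>
    intro j
    have h0 : A * B ^ (j + 1) = 0 := by rw [pow_succ' B j, ← mul_assoc, h, zero_mul]
    have h1 : (A + B) * B ^ (j + 1) = B ^ (j + 2) := by
      rw [add_mul, h0, zero_add, ← pow_succ']
    calc (A + B) ^ (k + 1) * B ^ (j + 1)
        = (A + B) ^ k * ((A + B) * B ^ (j + 1)) := by rw [pow_succ, mul_assoc]
      _ = (A + B) ^ k * B ^ ((j + 1) + 1) := by rw [h1]
      _ = B ^ (k + ((j + 1) + 1)) := ih (j + 1)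
      _ = B ^ ((k + 1) + (j + 1)) := by ring_nf

lemma isNilpotent_add_of_mul_eq_zero {A B : R} (h : A * B = 0)
    (hA : IsNilpotent A) (hB : IsNilpotent B) : IsNilpotent (A + B) := by
  obtain ⟨n, hn⟩ := hA
  obtain ⟨m, hm⟩ := hB
  have key : ∀ i, (A + B) ^ (m + i) = (A + B) ^ m * A ^ i := by
    intro i
    induction i with
    | zero => simp
    | succ i ih =>
      have hB' : (A + B) ^ (m + i) * B = 0 := by
        have := aux_pow_mul h (m + i) 0
        simp only [Nat.zero_add, pow_one] at this
        rw [this, add_assoc, pow_add, hm, zero_mul]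
      calc (A + B) ^ (m + (i + 1)) = (A + B) ^ (m + i) * (A + B) := by
            rw [← pow_succ]; ring_nf
        _ = (A + B) ^ (m + i) * A + (A + B) ^ (m + i) * B := by rw [mul_add]
        _ = (A + B) ^ (m + i) * A + 0 := by rw [hB']
        _ = (A + B) ^ m * A ^ (i + 1) := by rw [add_zero, ih, mul_assoc, pow_succ]
  exact ⟨m + n, by rw [key n, hn, mul_zero]⟩

lemma HasStronglyDrazinInverse.isNilpotent_sub_sq {a : R}
    (h : HasStronglyDrazinInverse a) : IsNilpotent (a - a ^ 2) := by
  obtain ⟨z, hc, hz, hn⟩ := h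
  have hae : a * (a * z) = (a * z) * a := by
    rw [hc, ← mul_assoc, hc]
  have he : (a * z) * (a * z) = a * z := by
    calc (a * z) * (a * z) = a * (z * a * z) := by rw [mul_assoc, ← mul_assoc z a z]
      _ = a * z := by rw [← hz]
  have factored : (a - a * z) * (1 - a * z - a) = a - a ^ 2 := by
    have expand : (a - a * z) * (1 - a * z - a)
        = a - a * (a * z) - a * a - ((a * z) - (a * z) * (a * z) - (a * z) * a) := by
      simp only [mul_sub, sub_mul, mul_one, one_mul]
      abel
    rw [expand, he, hae, sq]
    abel
  rw [← factored]
  have c1 : Commute (a - a * z) (a * z) :=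
    Commute.sub_left hae (Commute.refl _)
  have c2 : Commute (a - a * z) a :=
    Commute.sub_left (Commute.refl a) hae.symm
  exact ((Commute.one_right _).sub_right c1).sub_right c2 |>.isNilpotent_mul_right hn

lemma HasStronglyDrazinInverse.map {S : Type*} [Ring S] (f : R →+* S) {a : R}
    (h : HasStronglyDrazinInverse a) : HasStronglyDrazinInverse (f a) := by
  obtain ⟨z, hc, hz, hn⟩ := h
  exact ⟨f z, by rw [← map_mul, ← map_mul, hc], by rw [← map_mul, ← map_mul, ← hz],
    by rw [← map_mul, ← map_sub]; exact hn.map f⟩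

end Aux

lemma hasSD_of_comm {R : Type*} [CommRing R] {a : R}
    (h : IsNilpotent (a - a ^ 2)) : HasStronglyDrazinInverse a := by
  set f := Ideal.Quotient.mk (nilradical R) with hf
  have hker : ∀ x ∈ RingHom.ker f, IsNilpotent x := by
    intro x hx
    rw [RingHom.mem_ker, hf, Ideal.Quotient.eq_zero_iff_mem] at hx
    exact mem_nilradical.mp hx
  have hidem : IsIdempotentElem (f a) := by
    have h0 : f (a - a ^ 2) = 0 := by
      rw [hf, Ideal.Quotient.eq_zero_iff_mem]
      exact mem_nilradical.mpr h
    rw [map_sub] at h0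
    calc f a * f a = f (a ^ 2) := by rw [sq, map_mul]
      _ = f a := (sub_eq_zero.mp h0).symm
  obtain ⟨e, he, hfe⟩ :=
    exists_isIdempotentElem_eq_of_ker_isNilpotent f hker (f a) ⟨a, rfl⟩ hidem
  have hn : IsNilpotent (a - e) := by
    apply hker
    rw [RingHom.mem_ker, map_sub, hfe, sub_self]
  obtain ⟨u, hu⟩ := hn.isUnit_add_one
  set v := ((u⁻¹ : Rˣ) : R) with hvdef
  have hv : ((a - e) + 1) * v = 1 := by rw [← hu]; exact u.mul_inv
  have he' : e * e = e := he
  have haz : a * (e * v) = e := by linear_combination v * he' + e * hv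
  refine ⟨e * v, by ring, ?_, ?_⟩
  · linear_combination (-(e * v)) * haz - v * he'
  · rw [haz]; exact hn

lemma hasSD_of_isNilpotent_sub_sq {R A : Type*} [CommRing R] [Ring A] [Algebra R A] {a : A}
    (h : IsNilpotent (a - a ^ 2)) : HasStronglyDrazinInverse a := by
  letI : CommRing (Algebra.adjoin R ({a} : Set A)) :=
    Algebra.adjoinCommRingOfComm R (fun x hx y hy => by
      rw [Set.mem_singleton_iff] at hx hy; subst hx; subst hy; rfl)
  have haS : a ∈ Algebra.adjoin R ({a} : Set A) := Algebra.self_mem_adjoin_singleton R a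
  set a' : Algebra.adjoin R ({a} : Set A) := ⟨a, haS⟩ with ha'
  have h' : IsNilpotent (a' - a' ^ 2) := by
    obtain ⟨n, hn⟩ := h
    refine ⟨n, Subtype.coe_injective ?_⟩
    push_cast
    exact hn
  have := (hasSD_of_comm h').map (Algebra.adjoin R ({a} : Set A)).val.toRingHom
  simpa using this

variable {X : Type*} [NormedAddCommGroup X] [NormedSpace ℂ X] [CompleteSpace X]

theorem sdrazin_add (P Q : X →L[ℂ] X)
    (hP : HasStronglyDrazinInverse P) (hQ : HasStronglyDrazinInverse Q)
    (h : P * Q = 0) :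
    HasStronglyDrazinInverse (P + Q) := by
  have h' : ∀ x : X →L[ℂ] X, P * (Q * x) = 0 := fun x => by rw [← mul_assoc, h, zero_mul]
  have hA : IsNilpotent (P - P ^ 2) := hP.isNilpotent_sub_sq
  have hB1 : IsNilpotent (Q - Q ^ 2) := hQ.isNilpotent_sub_sq
  have hmnil : IsNilpotent (-(Q * P)) := by
    refine ⟨2, ?_⟩
    have h2 : (Q * P) ^ 2 = 0 := by rw [sq, mul_assoc, h' P, mul_zero]
    rw [neg_pow, h2, mul_zero]
  have hm0 : (-(Q * P)) * (Q - Q ^ 2) = 0 := by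
    simp [neg_mul, mul_sub, sq, mul_assoc, h, h']
  have hBnil : IsNilpotent ((-(Q * P)) + (Q - Q ^ 2)) :=
    isNilpotent_add_of_mul_eq_zero hm0 hmnil hB1
  have hAB : (P - P ^ 2) * ((-(Q * P)) + (Q - Q ^ 2)) = 0 := by
    have e1 : (P - P ^ 2) * (Q * P) = 0 := by
      simp [sub_mul, sq, mul_assoc, h, h']
    have e2 : (P - P ^ 2) * (Q - Q ^ 2) = 0 := by
      simp [sub_mul, mul_sub, sq, mul_assoc, h, h']
    rw [mul_add, mul_neg, e1, e2, neg_zero, zero_add]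
  have hs : IsNilpotent ((P - P ^ 2) + ((-(Q * P)) + (Q - Q ^ 2))) :=
    isNilpotent_add_of_mul_eq_zero hAB hA hBnil
  have hexp : (P + Q) - (P + Q) ^ 2 = (P - P ^ 2) + ((-(Q * P)) + (Q - Q ^ 2)) := by
    simp only [sq, add_mul, mul_add, h]
    abel
  exact hasSD_of_isNilpotent_sub_sq (R := ℂ) (hexp ▸ hs)
end

section
/- Let X be a complex Banach space and L(X) the Banach algebra of bounded linear operators on X. If P, Q ∈ L(X) have Hirano inverses and PQP = 0 and PQ² = 0, then P + Q has a Hirano inverse. -/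
section Aux

/-- If `x`, `y` are nilpotent and `yx` annihilates both `x` and `y` on the right,
then `x + y` is nilpotent.  Key expansion lemma. -/
theorem HiranoAux.key_sum {R : Type*} [Ring R] {x y : R}
    (h1 : y * x * x = 0) (h2 : y * x * y = 0) (k : ℕ) :
    (x + y) ^ (k + 2) =
      (∑ i ∈ Finset.range (k + 3), x ^ i * y ^ (k + 2 - i)) +
      (∑ i ∈ Finset.range (k + 1), x ^ i * y ^ (k - i)) * (y * x) := by
  induction k with
  | zero =>
    simp only [Finset.sum_range_succ, Finset.sum_range_zero, Finset.sum_range_one]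
    norm_num
    noncomm_ring
  | succ k ih =>
    have hgxy : (y * x) * (x + y) = 0 := by rw [mul_add, h1, h2, add_zero]
    have step : (x + y) ^ (k + 1 + 2) = ((x + y) ^ (k + 2)) * (x + y) := by
      rw [← pow_succ]
    rw [step, ih, add_mul, mul_assoc _ (y*x) (x+y), hgxy, mul_zero, add_zero, mul_add]
    have hAx : (∑ i ∈ Finset.range (k + 3), x ^ i * y ^ (k + 2 - i)) * x
        = (∑ i ∈ Finset.range (k + 2), x ^ i * y ^ (k + 1 - i)) * (y * x) + x ^ (k + 3) := by
      rw [Finset.sum_range_succ, add_mul]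
      congr 1
      · rw [Finset.sum_mul, Finset.sum_mul]
        refine Finset.sum_congr rfl fun i hi => ?_
        have hi' : i ≤ k + 1 := by simpa [Nat.lt_succ_iff] using hi
        have : k + 2 - i = (k + 1 - i) + 1 := by omega
        rw [this, pow_succ, mul_assoc, mul_assoc, mul_assoc]
      · have : k + 2 - (k + 2) = 0 := by omega
        rw [this, pow_zero, mul_one, ← pow_succ]
    have hAy : (∑ i ∈ Finset.range (k + 3), x ^ i * y ^ (k + 2 - i)) * y
        = ∑ i ∈ Finset.range (k + 3), x ^ i * y ^ (k + 3 - i) := by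
      rw [Finset.sum_mul]
      refine Finset.sum_congr rfl fun i hi => ?_
      have hi' : i ≤ k + 2 := by simpa [Nat.lt_succ_iff] using hi
      have : k + 3 - i = (k + 2 - i) + 1 := by omega
      rw [this, pow_succ, mul_assoc]
    rw [hAx, hAy]
    rw [Finset.sum_range_succ (n := k + 3)]
    have : k + 1 + 2 - (k + 3) = 0 := by omega
    rw [this, pow_zero, mul_one]
    have h4 : ∀ i, k + 1 + 2 - i = k + 3 - i := fun i => by omega
    simp only [h4]
    abel

theorem HiranoAux.nilp_add {R : Type*} [Ring R] {x y : R}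
    (hx : IsNilpotent x) (hy : IsNilpotent y)
    (h1 : y * x * x = 0) (h2 : y * x * y = 0) : IsNilpotent (x + y) := by
  obtain ⟨m, hm⟩ := hx
  obtain ⟨n, hn⟩ := hy
  refine ⟨m + n + 2, ?_⟩
  rw [HiranoAux.key_sum h1 h2 (m + n)]
  have hxp : ∀ i, m ≤ i → x ^ i = 0 := fun i hi => by
    rw [show i = m + (i - m) by omega, pow_add, hm, zero_mul]
  have hyp : ∀ i, n ≤ i → y ^ i = 0 := fun i hi => by
    rw [show i = n + (i - n) by omega, pow_add, hn, zero_mul]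
  have e1 : (∑ i ∈ Finset.range (m + n + 3), x ^ i * y ^ (m + n + 2 - i)) = 0 := by
    refine Finset.sum_eq_zero fun i hi => ?_
    rcases le_or_gt m i with h | h
    · rw [hxp i h, zero_mul]
    · rw [hyp _ (by omega), mul_zero]
  have e2 : (∑ i ∈ Finset.range (m + n + 1), x ^ i * y ^ (m + n - i)) = 0 := by
    refine Finset.sum_eq_zero fun i hi => ?_
    rcases le_or_gt m i with h | h
    · rw [hxp i h, zero_mul]
    · rw [hyp _ (by omega), mul_zero]
  rw [e1, e2, zero_mul, add_zero]

/-- In a commutative ring, if `a - a³` is nilpotent then `a` has a "Hirano inverse". -/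
theorem HiranoAux.comm_exists {R : Type*} [CommRing R] (a : R) (h : IsNilpotent (a - a ^ 3)) :
    ∃ z : R, z = z * a * z ∧ IsNilpotent (a ^ 2 - a * z) := by
  obtain ⟨u, hu⟩ : ∃ u : R, u = a ^ 2 := ⟨_, rfl⟩
  have hun : IsNilpotent (u - u ^ 2) := by
    have heq : u - u ^ 2 = (a - a ^ 3) * a := by rw [hu]; ring
    rw [heq]
    exact (Commute.all (a - a ^ 3) a).isNilpotent_mul_right h
  obtain ⟨n, hn⟩ := hun
  have hN : (u - u ^ 2) ^ (n + 1) = 0 := by rw [pow_succ, hn, zero_mul]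
  have he : IsIdempotentElem (1 - (1 - u ^ (n + 1)) ^ (n + 1)) :=
    isIdempotentElem_one_sub_one_sub_pow_pow u (n + 1) hN
  obtain ⟨e, hedef⟩ : ∃ e : R, e = 1 - (1 - u ^ (n + 1)) ^ (n + 1) := ⟨_, rfl⟩
  rw [← hedef] at he
  have hue : IsNilpotent (u - e) := by
    rw [← mem_nilradical, ← Ideal.Quotient.eq_zero_iff_mem]
    have h1 : (Ideal.Quotient.mk (nilradical R)) (u - u ^ 2) = 0 :=
      Ideal.Quotient.eq_zero_iff_mem.mpr (mem_nilradical.mpr ⟨n, hn⟩)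
    set φ := Ideal.Quotient.mk (nilradical R) with hφ
    have hid : IsIdempotentElem (φ u) := by
      rw [map_sub, map_pow, sub_eq_zero] at h1
      rw [IsIdempotentElem, ← pow_two, ← h1]
    have hpow : (φ u) ^ (n + 1) = φ u := hid.pow_succ_eq n
    have hpow2 : (1 - φ u) ^ (n + 1) = 1 - φ u := hid.one_sub.pow_succ_eq n
    rw [map_sub, hedef, map_sub, map_one, map_pow, map_sub, map_one, map_pow, hpow, hpow2]
    ring
  have hn₁ : IsNilpotent ((u - e) * e) := (Commute.all _ _).isNilpotent_mul_right hue
  have hU : IsUnit (1 + (u - e) * e) := hn₁.isUnit_one_add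
  obtain ⟨w, hwdef⟩ : ∃ w : R, w = ↑hU.unit⁻¹ := ⟨_, rfl⟩
  have hw1 : (1 + (u - e) * e) * w = 1 := by
    rw [hwdef]; exact hU.mul_val_inv
  have hkey : u * e = e * (1 + (u - e) * e) := by
    linear_combination (e + 1 - u) * he.eq
  have haz : a * (a * e * w) = e := by
    calc a * (a * e * w) = (u * e) * w := by rw [hu]; ring
      _ = e * ((1 + (u - e) * e) * w) := by rw [hkey, mul_assoc]
      _ = e := by rw [hw1, mul_one]
  refine ⟨a * e * w, ?_, ?_⟩
  · calc a * e * w = e * (a * e * w) := by linear_combination (-(a*w)) * he.eq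
      _ = (a * (a * e * w)) * (a * e * w) := by rw [haz]
      _ = a * e * w * a * (a * e * w) := by ring
  · have h2 : a ^ 2 - a * (a * e * w) = u - e := by rw [haz, hu]
    rw [h2]; exact hue

/-- Forward: a Hirano inverse implies `a - a³` nilpotent, in any ring. -/
theorem HiranoAux.nilpotent_of_hirano {R : Type*} [Ring R] {a : R} (h : HasHiranoInverse a) :
    IsNilpotent (a - a ^ 3) := by
  obtain ⟨z, hc, hzz, hn⟩ := h
  obtain ⟨e, hedef⟩ : ∃ e : R, e = a * z := ⟨_, rfl⟩
  rw [← hedef] at hn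
  have he : e * e = e := by
    rw [hedef]
    calc a * z * (a * z) = a * (z * a * z) := by rw [mul_assoc a z (a*z), ← mul_assoc z a z]
      _ = a * z := by rw [← hzz]
  have hae : a * e = e * a := by
    rw [hedef, mul_assoc a z a, ← hc]
  have cae : Commute a e := hae
  have hea : ∀ x : R, e * (a * x) = a * (e * x) := fun x => by
    rw [← mul_assoc, ← hae, mul_assoc]
  have hee : ∀ x : R, e * (e * x) = e * x := fun x => by rw [← mul_assoc, he]
  have hx2 : (a - a * e) * (a - a * e) = (a ^ 2 - e) * (1 - e) := by
    simp only [mul_sub, sub_mul, mul_one, one_mul, pow_two, mul_assoc, hea, hee, he, ← hae]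
    abel
  have c2 : Commute (a ^ 2 - e) e := (cae.pow_left 2).sub_left (Commute.refl e)
  have c3 : Commute (a ^ 2 - e) (1 - e) := (Commute.one_right _).sub_right c2
  have hx : IsNilpotent (a - a * e) := by
    obtain ⟨k, hk⟩ := c3.isNilpotent_mul_right hn
    exact ⟨2 * k, by rw [pow_mul, pow_two, hx2, hk]⟩
  have c4 : Commute a (a ^ 2 - e) := ((Commute.refl a).pow_right 2).sub_right cae
  have hy : IsNilpotent (a * (a ^ 2 - e)) := c4.isNilpotent_mul_left hn
  have hsum : a - a ^ 3 = (a - a * e) - a * (a ^ 2 - e) := by noncomm_ring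
  have cxy : Commute (a - a * e) (a * (a ^ 2 - e)) := by
    have ha_c : Commute a (a * (a ^ 2 - e)) := (Commute.refl a).mul_right c4
    have he_c : Commute (a * e) (a * (a ^ 2 - e)) :=
      ha_c.mul_left (cae.symm.mul_right c2.symm)
    exact ha_c.sub_left he_c
  rw [hsum]
  exact cxy.isNilpotent_sub hx hy

/-- Backward: `a - a³` nilpotent implies a Hirano inverse, in any ring. -/
theorem HiranoAux.hirano_of_nilpotent {R : Type*} [Ring R] {a : R}
    (h : IsNilpotent (a - a ^ 3)) : HasHiranoInverse a := by
  obtain ⟨k, hk⟩ := h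
  let I : Ideal (Polynomial ℤ) := Ideal.span {(Polynomial.X - Polynomial.X ^ 3) ^ k}
  let Q := Polynomial ℤ ⧸ I
  let t : Q := Ideal.Quotient.mk I Polynomial.X
  have ht : IsNilpotent (t - t ^ 3) := by
    refine ⟨k, ?_⟩
    have : (t - t ^ 3) ^ k = Ideal.Quotient.mk I ((Polynomial.X - Polynomial.X ^ 3) ^ k) := by
      simp [t]
    rw [this, Ideal.Quotient.eq_zero_iff_mem]
    exact Ideal.subset_span rfl
  obtain ⟨z, hz1, hz2⟩ := HiranoAux.comm_exists t ht
  have hvanish : ∀ p ∈ I, (Polynomial.aeval a) p = 0 := by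
    intro p hp
    rw [Ideal.mem_span_singleton] at hp
    obtain ⟨c, rfl⟩ := hp
    rw [map_mul]
    have : (Polynomial.aeval (R := ℤ) a) ((Polynomial.X - Polynomial.X ^ 3) ^ k) = 0 := by
      simp only [map_pow, map_sub, Polynomial.aeval_X, hk]
    rw [this, zero_mul]
  let ψ : Q →+* R := Ideal.Quotient.lift I (Polynomial.aeval a).toRingHom hvanish
  have hψt : ψ t = a := by
    show Ideal.Quotient.lift I _ hvanish (Ideal.Quotient.mk I Polynomial.X) = a
    rw [Ideal.Quotient.lift_mk]
    simp
  refine ⟨ψ z, ?_, ?_, ?_⟩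
  · rw [← hψt, ← map_mul, ← map_mul, mul_comm]
  · rw [← hψt, ← map_mul, ← map_mul]
    exact congrArg ψ hz1
  · have := hz2.map ψ
    rwa [map_sub, map_pow, map_mul, hψt] at this

/-- Key combinatorial step: nilpotency of `(a+b) - (a+b)³`. -/
theorem HiranoAux.sum_nilpotent {R : Type*} [Ring R] {a b : R}
    (hα : IsNilpotent (a - a ^ 3)) (hβ : IsNilpotent (b - b ^ 3))
    (h1 : a * b * a = 0) (h2 : a * b ^ 2 = 0) :
    IsNilpotent ((a + b) - (a + b) ^ 3) := by
  have r1 : a * (b * a) = 0 := by rw [← mul_assoc]; exact h1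
  have r2 : a * (b * b) = 0 := by rw [← pow_two]; exact h2
  have r1' : ∀ x : R, a * (b * (a * x)) = 0 := fun x => by
    rw [← mul_assoc b a x, ← mul_assoc, r1, zero_mul]
  have r2' : ∀ x : R, a * (b * (b * x)) = 0 := fun x => by
    rw [← mul_assoc b b x, ← mul_assoc, r2, zero_mul]
  obtain ⟨γ, hγdef⟩ : ∃ γ : R, γ = b * (a + b) * a := ⟨_, rfl⟩
  obtain ⟨e, hedef⟩ : ∃ e : R, e = -γ + (a - a ^ 3) := ⟨_, rfl⟩
  obtain ⟨m, hmdef⟩ : ∃ m : R, m = a ^ 2 * b + b * a * b := ⟨_, rfl⟩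
  have hγγ : γ * γ = 0 := by
    rw [hγdef]
    simp only [add_mul, mul_add, mul_assoc, r1', r2', r1, r2, mul_zero, zero_mul, add_zero,
      zero_add]
  have hαγ : (a - a ^ 3) * γ = 0 := by
    rw [hγdef]
    simp only [pow_succ, pow_zero, one_mul, sub_mul, add_mul, mul_add, mul_assoc, r1', r2', r1,
      r2, mul_zero, zero_mul, add_zero, zero_add, sub_zero, sub_self]
  have hγn : IsNilpotent (-γ) := ⟨2, by rw [pow_two, neg_mul_neg, hγγ]⟩
  have hen : IsNilpotent e := by
    rw [hedef]
    refine HiranoAux.nilp_add hγn hα ?_ ?_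
    · simp [hαγ]
    · simp [hαγ]
  have heββ : e * (b - b ^ 3) * (b - b ^ 3) = 0 := by
    rw [hedef, hγdef]
    simp only [pow_succ, pow_zero, one_mul, sub_mul, mul_sub, add_mul, mul_add, neg_mul, mul_neg,
      neg_neg, neg_sub, mul_assoc, r1', r2', r1, r2, mul_zero, zero_mul, add_zero, zero_add,
      sub_zero, zero_sub, sub_self, neg_zero]
  have heβe : e * (b - b ^ 3) * e = 0 := by
    rw [hedef, hγdef]
    simp only [pow_succ, pow_zero, one_mul, sub_mul, mul_sub, add_mul, mul_add, neg_mul, mul_neg,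
      neg_neg, neg_sub, mul_assoc, r1', r2', r1, r2, mul_zero, zero_mul, add_zero, zero_add,
      sub_zero, zero_sub, sub_self, neg_zero]
  have hs'n : IsNilpotent ((b - b ^ 3) + e) := HiranoAux.nilp_add hβ hen heββ heβe
  have hms' : m * ((b - b ^ 3) + e) = 0 := by
    rw [hmdef, hedef, hγdef]
    simp only [pow_succ, pow_zero, one_mul, sub_mul, mul_sub, add_mul, mul_add, neg_mul, mul_neg,
      neg_neg, neg_sub, mul_assoc, r1', r2', r1, r2, mul_zero, zero_mul, add_zero, zero_add,
      sub_zero, zero_sub, sub_self, neg_zero]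
  have hmm : m * m = 0 := by
    rw [hmdef]
    simp only [pow_succ, pow_zero, one_mul, add_mul, mul_add, mul_assoc, r1', r2', r1, r2,
      mul_zero, zero_mul, add_zero, zero_add]
  have hmn : IsNilpotent (-m) := ⟨2, by rw [pow_two, neg_mul_neg, hmm]⟩
  have hfinal : IsNilpotent (((b - b ^ 3) + e) + -m) := by
    refine HiranoAux.nilp_add hs'n hmn ?_ ?_
    · simp [hms']
    · simp [hms']
  have hid : (a + b) - (a + b) ^ 3 =
      ((((b - b ^ 3) + e) + -m) - a * b * a) - a * b ^ 2 := by
    rw [hedef, hγdef, hmdef]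
    noncomm_ring
  rw [hid, h1, h2, sub_zero, sub_zero]
  exact hfinal

end Aux

variable {X : Type*} [NormedAddCommGroup X] [NormedSpace ℂ X] [CompleteSpace X]

theorem hirano_add (P Q : X →L[ℂ] X)
    (hP : HasHiranoInverse P) (hQ : HasHiranoInverse Q)
    (h1 : P * Q * P = 0) (h2 : P * Q ^ 2 = 0) :
    HasHiranoInverse (P + Q) := by
  exact HiranoAux.hirano_of_nilpotent
    (HiranoAux.sum_nilpotent (HiranoAux.nilpotent_of_hirano hP)
      (HiranoAux.nilpotent_of_hirano hQ) h1 h2)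
end

section
/- Let X be a complex Banach space and L(X) the Banach algebra of bounded linear operators on X. Suppose A, B ∈ L(X) have strongly Drazin inverses and A^D B A^D = 0, where A^D is the Drazin inverse of A. Then the 2×2 operator matrix [[A·A^e, B], [A^e, 0]], where A^e = A·A^D, has a strongly Drazin inverse in M₂(L(X)). -/
open Polynomial

private noncomputable def newtonPoly : ℕ → Polynomial ℤ
  | 0 => X
  | (k+1) => 3 * (newtonPoly k)^2 - 2 * (newtonPoly k)^3

private lemma newton_dvd1 (k : ℕ) :
    (X - X^2 : Polynomial ℤ) ^ (2^k) ∣ (newtonPoly k - (newtonPoly k)^2) := by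
  induction k with
  | zero => simp [newtonPoly]
  | succ k ih =>
    have key : newtonPoly (k+1) - (newtonPoly (k+1))^2
        = (newtonPoly k - (newtonPoly k)^2)^2 * (3 + 4*(newtonPoly k - (newtonPoly k)^2)) := by
      simp only [newtonPoly]; ring
    have h1 : (X - X^2 : Polynomial ℤ)^(2^(k+1)) = ((X - X^2 : Polynomial ℤ)^(2^k))^2 := by
      rw [← pow_mul]; congr 1
    rw [key, h1]
    exact dvd_mul_of_dvd_left (pow_dvd_pow_of_dvd ih 2) _

private lemma newton_dvd2 (k : ℕ) :
    (X - X^2 : Polynomial ℤ) ∣ (X - newtonPoly k) := by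
  induction k with
  | zero => simp [newtonPoly]
  | succ k ih =>
    have key : X - newtonPoly (k+1)
        = (X - newtonPoly k) + (newtonPoly k - (newtonPoly k)^2) * (1 - 2 * newtonPoly k) := by
      simp only [newtonPoly]; ring
    rw [key]
    refine dvd_add ih (dvd_mul_of_dvd_left ?_ _)
    exact dvd_trans (dvd_pow_self _ (pow_pos (by norm_num : (0:ℕ) < 2) k).ne') (newton_dvd1 k)

theorem hasSDI_of_nilpotent {R : Type*} [Ring R] (a : R) (h : IsNilpotent (a - a * a)) :
    HasStronglyDrazinInverse a := by
  obtain ⟨m, hm0⟩ := h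
  have hm : (a - a^2)^m = 0 := by rwa [pow_two]
  have hcomm : ∀ P Q : Polynomial ℤ, Commute (aeval a P) (aeval a Q) := by
    intro P Q
    unfold Commute SemiconjBy
    rw [← map_mul, ← map_mul, mul_comm]
  have haeval : aeval a (X - X^2 : Polynomial ℤ) = a - a^2 := by
    simp
  set p : R := aeval a (newtonPoly m) with hp
  have hap : Commute a p := by
    have := hcomm X (newtonPoly m)
    simpa using this
  -- p idempotent
  obtain ⟨c, hc⟩ := newton_dvd1 m
  have hα2 : (a - a^2) ^ (2^m) = 0 := by
    have hle : m ≤ 2^m := (Nat.lt_two_pow_self (n := m)).le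
    calc (a - a^2)^(2^m) = (a - a^2)^m * (a - a^2)^(2^m - m) := by
          rw [← pow_add]; congr 1; omega
    _ = 0 := by rw [hm, zero_mul]
  have hps : p - p^2 = 0 := by
    have := congrArg (aeval a) hc
    simp only [map_sub, map_pow, map_mul, aeval_X] at this
    rw [← hp] at this
    rw [this, hα2, zero_mul]
  have hidem : p * p = p := by
    have h2 := sub_eq_zero.mp hps
    rw [← pow_two]; exact h2.symm
  -- n := a - p nilpotent
  obtain ⟨d, hd⟩ := newton_dvd2 m
  have hnval : a - p = (a - a^2) * aeval a d := by
    have := congrArg (aeval a) hd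
    simp only [map_sub, map_mul, map_pow, aeval_X] at this
    rw [← hp] at this
    exact this
  have hn : IsNilpotent (a - p) := by
    rw [hnval]
    have hcom : Commute (a - a^2) (aeval a d) := by
      have := hcomm (X - X^2) d
      rwa [haeval] at this
    exact hcom.isNilpotent_mul_right ⟨m, hm⟩
  -- unit 1 + (a - p)
  obtain ⟨u, hu⟩ := hn.isUnit_one_add
  have cu : Commute a (↑u : R) := by
    rw [hu]
    exact (Commute.one_right a).add_right ((Commute.refl a).sub_right hap)
  have cui : Commute a (↑u⁻¹ : R) := cu.units_inv_right
  have cpu : Commute p (↑u : R) := by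
    rw [hu]
    exact (Commute.one_right p).add_right (hap.symm.sub_right (Commute.refl p))
  have cpui : Commute p (↑u⁻¹ : R) := cpu.units_inv_right
  have key : p * ↑u = a * p := by
    rw [hu, mul_add, mul_one, mul_sub, hidem, ← hap.eq]
    abel
  refine ⟨p * ↑u⁻¹, ?_, ?_, ?_⟩
  · -- a * z = z * a
    calc a * (p * ↑u⁻¹) = (a * p) * ↑u⁻¹ := by rw [mul_assoc]
    _ = (p * a) * ↑u⁻¹ := by rw [hap.eq]
    _ = p * (a * ↑u⁻¹) := by rw [mul_assoc]
    _ = p * (↑u⁻¹ * a) := by rw [cui.eq]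
    _ = (p * ↑u⁻¹) * a := by rw [mul_assoc]
  · -- z = z a z
    have haz : a * (p * ↑u⁻¹) = p := by
      calc a * (p * ↑u⁻¹) = (a * p) * ↑u⁻¹ := by rw [mul_assoc]
      _ = (p * ↑u) * ↑u⁻¹ := by rw [key]
      _ = p * (↑u * ↑u⁻¹) := by rw [mul_assoc]
      _ = p := by rw [Units.mul_inv, mul_one]
    have hza : (p * ↑u⁻¹) * a = p := by
      calc (p * ↑u⁻¹) * a = p * (↑u⁻¹ * a) := by rw [mul_assoc]
      _ = p * (a * ↑u⁻¹) := by rw [cui.eq]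
      _ = (p * a) * ↑u⁻¹ := by rw [mul_assoc]
      _ = (a * p) * ↑u⁻¹ := by rw [hap.eq]
      _ = a * (p * ↑u⁻¹) := by rw [mul_assoc]
      _ = p := haz
    rw [hza, ← mul_assoc, hidem]
  · -- a - a z nilpotent
    have haz : a * (p * ↑u⁻¹) = p := by
      calc a * (p * ↑u⁻¹) = (a * p) * ↑u⁻¹ := by rw [mul_assoc]
      _ = (p * ↑u) * ↑u⁻¹ := by rw [key]
      _ = p * (↑u * ↑u⁻¹) := by rw [mul_assoc]
      _ = p := by rw [Units.mul_inv, mul_one]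
    rw [haz]
    exact hn


private lemma corner_nilpotent' {R : Type*} [Ring R] (a b e : R)
    (he : e * e = e) (hea : e * a = a * e) (hebe : e * b * e = 0)
    (h3 : IsNilpotent (a - e)) :
    IsNilpotent ((!![a * e, b; e, 0] : Matrix (Fin 2) (Fin 2) R)
      - !![a * e, b; e, 0] * !![a * e, b; e, 0]) := by
  have l1 : ∀ x : R, e * (e * x) = e * x := fun x => by rw [← mul_assoc, he]
  have l3 : ∀ x : R, e * (a * x) = a * (e * x) := fun x => by
    rw [← mul_assoc, hea, mul_assoc]
  have l4 : e * (b * e) = 0 := by rw [← mul_assoc]; exact hebe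
  have l4' : ∀ x : R, e * (b * (e * x)) = 0 := fun x => by
    rw [show e * (b * (e * x)) = (e * (b * e)) * x by noncomm_ring, l4, zero_mul]
  set T : Matrix (Fin 2) (Fin 2) R :=
    !![a * e, b; e, 0] - !![a * e, b; e, 0] * !![a * e, b; e, 0] with hT
  set F : Matrix (Fin 2) (Fin 2) R := !![e, 0; 0, 0] with hF
  set E₁ : Matrix (Fin 2) (Fin 2) R := !![1 - e, 0; 0, 0] with hE1
  set E₂ : Matrix (Fin 2) (Fin 2) R := !![0, 0; 0, e] with hE2
  set G : Matrix (Fin 2) (Fin 2) R := !![0, 0; 0, 1 - e] with hG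
  have hTval : T = !![a * e - (a * e * (a * e) + b * e), b - a * e * b;
      e - e * (a * e), -(e * b)] := by
    rw [hT, Matrix.mul_fin_two]
    ext i j
    fin_cases i <;> fin_cases j <;> simp [Matrix.sub_apply]
  have hTE1 : T * E₁ = 0 := by
    rw [hTval, hE1, Matrix.mul_fin_two]
    ext i j
    fin_cases i <;> fin_cases j <;>
      simp [mul_sub, sub_mul, mul_add, add_mul, mul_assoc, l1, l3, l4, l4', he, hea] <;>
      abel
  have hTE2 : T * E₂ = !![0, b * e; 0, 0] := by
    rw [hTval, hE2, Matrix.mul_fin_two]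
    ext i j
    fin_cases i <;> fin_cases j <;>
      simp [mul_sub, sub_mul, mul_add, add_mul, mul_assoc, l1, l3, l4, l4', he, hea] <;>
      abel
  have hTTE2 : T * (T * E₂) = 0 := by
    rw [hTE2, hTval, Matrix.mul_fin_two]
    ext i j
    fin_cases i <;> fin_cases j <;>
      simp [mul_sub, sub_mul, mul_add, add_mul, mul_assoc, l1, l3, l4, l4', he, hea] <;>
      abel
  have hGT : G * T = 0 := by
    rw [hTval, hG, Matrix.mul_fin_two]
    ext i j
    fin_cases i <;> fin_cases j <;>
      simp [mul_sub, sub_mul, mul_add, add_mul, mul_assoc, l1, l3, l4, l4', he, hea] <;>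
      abel
  have hFF : F * F = F := by
    rw [hF, Matrix.mul_fin_two]
    ext i j
    fin_cases i <;> fin_cases j <;> simp [he]
  have hsum : E₁ + E₂ + F + G = 1 := by
    rw [hE1, hE2, hF, hG]
    ext i j
    fin_cases i <;> fin_cases j <;>
      simp [Matrix.add_apply, Matrix.one_apply] <;> abel
  -- nilpotency of the corner F*T*F
  have hFTF : F * T * F = !![a * e - a * (a * e), 0; 0, 0] := by
    rw [hTval, hF, Matrix.mul_fin_two, Matrix.mul_fin_two]
    ext i j
    fin_cases i <;> fin_cases j <;>
      simp [mul_sub, sub_mul, mul_add, add_mul, mul_assoc, l1, l3, l4, l4', he, hea] <;>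
      abel
  have hnw : IsNilpotent (a * e - a * (a * e)) := by
    set n : R := a - e with hn
    have hne : Commute n e := by
      unfold Commute SemiconjBy
      rw [hn, sub_mul, mul_sub, he, hea]
    have hn1 : IsNilpotent (n + n * n) := by
      have hid : n + n * n = n * (1 + n) := by noncomm_ring
      rw [hid]
      exact ((Commute.one_right n).add_right (Commute.refl n)).isNilpotent_mul_right h3
    have hn2 : IsNilpotent ((n + n * n) * e) :=
      ((hne.add_left (hne.mul_left hne)).isNilpotent_mul_right hn1)
    have hid2 : a * e - a * (a * e) = -((n + n * n) * e) := by
      rw [hn]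
      simp only [mul_sub, sub_mul, mul_add, add_mul, mul_assoc, l1, l3, he, hea, mul_one,
        one_mul]
      abel
    rw [hid2]
    exact hn2.neg
  have hcorner : ∀ (w : R) (j : ℕ),
      (!![w, 0; 0, 0] : Matrix (Fin 2) (Fin 2) R) ^ (j + 1) = !![w ^ (j + 1), 0; 0, 0] := by
    intro w j
    induction j with
    | zero => simp
    | succ j ih =>
      rw [pow_succ, ih, Matrix.mul_fin_two]
      ext i j'
      fin_cases i <;> fin_cases j' <;> simp [pow_succ]
  have hFTFnil : IsNilpotent (F * T * F) := by
    obtain ⟨k, hk⟩ := hnw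
    refine ⟨k + 1, ?_⟩
    rw [hFTF, hcorner, pow_succ, hk, zero_mul]
    ext i j
    fin_cases i <;> fin_cases j <;> simp
  -- power chain
  have hTT : T * T = T * T * F + T * T * G := by
    calc T * T = T * T * (E₁ + E₂ + F + G) := by rw [hsum, mul_one]
    _ = T * T * E₁ + T * T * E₂ + T * T * F + T * T * G := by rw [mul_add, mul_add, mul_add]
    _ = T * T * F + T * T * G := by
        rw [mul_assoc T T E₁, hTE1, mul_zero, mul_assoc T T E₂, hTTE2, add_zero, zero_add]
  have hT3 : T * T * T = T * T * (F * T) := by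
    calc T * T * T = (T * T * F + T * T * G) * T := by rw [← hTT]
    _ = T * T * (F * T) + T * T * (G * T) := by rw [add_mul, mul_assoc (T * T) F T, mul_assoc (T * T) G T]
    _ = T * T * (F * T) := by rw [hGT, mul_zero, add_zero]
  have hkey : ∀ k, T ^ (k + 2) = T * T * (F * T) ^ k := by
    intro k
    induction k with
    | zero => rw [pow_zero, mul_one, pow_two]
    | succ k ih =>
      have h4 : T ^ (k + 3) = T * T ^ (k + 2) := by rw [← pow_succ']
      rw [h4, ih, ← mul_assoc, show T * (T * T) = T * T * T from (mul_assoc T T T).symm, hT3,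
        mul_assoc, ← pow_succ']
  have hXF : ∀ k : ℕ, (F * T * F) ^ (k + 1) * F = (F * T * F) ^ (k + 1) := by
    intro k
    rw [pow_succ, mul_assoc ((F * T * F) ^ k) (F * T * F) F,
      show F * T * F * F = F * T * F from by rw [mul_assoc, hFF]]
  have hFT : ∀ k : ℕ, (F * T) ^ (k + 2) = (F * T * F) ^ (k + 1) * T := by
    intro k
    induction k with
    | zero =>
      rw [pow_two, pow_one]
      exact (mul_assoc (F * T) F T).symm
    | succ k ih =>
      calc (F * T) ^ (k + 3) = (F * T) ^ (k + 2) * (F * T) := by rw [pow_succ]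
      _ = (F * T * F) ^ (k + 1) * T * (F * T) := by rw [ih]
      _ = (F * T * F) ^ (k + 1) * (T * (F * T)) := by rw [mul_assoc]
      _ = (F * T * F) ^ (k + 1) * F * (T * (F * T)) := by rw [hXF]
      _ = (F * T * F) ^ (k + 1) * (F * (T * (F * T))) := by rw [mul_assoc]
      _ = (F * T * F) ^ (k + 1) * ((F * T) * (F * T)) := by rw [mul_assoc F T (F * T)]
      _ = (F * T * F) ^ (k + 1) * ((F * T * F) * T) := by
          rw [mul_assoc (F * T) F T]
      _ = (F * T * F) ^ (k + 2) * T := by rw [← mul_assoc, ← pow_succ]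
  obtain ⟨j, hj⟩ := hFTFnil
  refine ⟨j + 4, ?_⟩
  have hj1 : (F * T * F) ^ (j + 1) = 0 := by rw [pow_succ, hj, zero_mul]
  calc T ^ (j + 4) = T * T * (F * T) ^ (j + 2) := hkey (j + 2)
  _ = T * T * ((F * T * F) ^ (j + 1) * T) := by rw [hFT j]
  _ = 0 := by rw [hj1, zero_mul, mul_zero]

variable {X : Type*} [NormedAddCommGroup X] [NormedSpace ℂ X] [CompleteSpace X]

theorem sdrazin_corner (A B AD : X →L[ℂ] X)
    (hAD : A * AD = AD * A ∧ AD = AD * A * AD ∧ IsNilpotent (A - A * AD))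
    (hB : HasStronglyDrazinInverse B)
    (h : AD * B * AD = 0) :
    HasStronglyDrazinInverse
      (!![A * (A * AD), B; A * AD, 0] : Matrix (Fin 2) (Fin 2) (X →L[ℂ] X)) := by
  obtain ⟨h1, h2, h3⟩ := hAD
  have he : (A * AD) * (A * AD) = A * AD := by
    rw [mul_assoc A AD (A * AD), ← mul_assoc AD A AD, ← h2]
  have hea : (A * AD) * A = A * (A * AD) := by rw [mul_assoc, ← h1]
  have hebe : (A * AD) * B * (A * AD) = 0 := by
    nth_rewrite 2 [h1]
    rw [show A * AD * B * (AD * A) = A * (AD * B * AD) * A by noncomm_ring, h, mul_zero,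
      zero_mul]
  exact hasSDI_of_nilpotent _ (corner_nilpotent' A B (A * AD) he hea hebe h3)
end

section
/- Let X be a complex Banach space and L(X) the Banach algebra of bounded linear operators on X. Let M = [[A, B], [I, 0]] ∈ M₂(L(X)), where I is the identity operator, and suppose A and B have strongly Drazin inverses. If A^D B A^D = 0, B A^π B = 0 and B A A^π = 0, where A^D is the Drazin inverse of A and A^π = I − A·A^D, then M has a Hirano inverse in M₂(L(X)). -/
theorem fin2_ext {α : Type*} {a b c d a' b' c' d' : α}
    (h11 : a = a') (h12 : b = b') (h21 : c = c') (h22 : d = d') :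
    !![a, b; c, d] = !![a', b'; c', d'] := by rw [h11, h12, h21, h22]

theorem fin2_add {α : Type*} [Add α] (a b c d a' b' c' d' : α) :
    !![a, b; c, d] + !![a', b'; c', d'] = !![a+a', b+b'; c+c', d+d'] := by
  ext i j; fin_cases i <;> fin_cases j <;> rfl

theorem fin2_sub {α : Type*} [Sub α] (a b c d a' b' c' d' : α) :
    !![a, b; c, d] - !![a', b'; c', d'] = !![a-a', b-b'; c-c', d-d'] := by
  ext i j; fin_cases i <;> fin_cases j <;> rfl

theorem fin2_zero {α : Type*} [Zero α] : (!![0, 0; 0, 0] : Matrix (Fin 2) (Fin 2) α) = 0 := by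
  ext i j; fin_cases i <;> fin_cases j <;> rfl



theorem idem_pow {S : Type*} [Monoid S] {e : S} (he : e * e = e) :
    ∀ k : ℕ, e ^ (k + 1) = e := by
  intro k
  induction k with
  | zero => rw [pow_one]
  | succ k ih => rw [pow_succ, ih, he]

/-- In a commutative ring, if `b - b^2` is nilpotent then `b` has a
"strongly Drazin inverse" `z`. -/
theorem comm_aux {S : Type*} [CommRing S] (b : S) (hb : IsNilpotent (b - b*b)) :
    ∃ z : S, z = z * b * z ∧ IsNilpotent (b - b * z) := by
  obtain ⟨m, hm0⟩ := hb
  set n := m + 1 with hn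
  have hm : (b - b*b) ^ n = 0 := by rw [hn, pow_succ, hm0, zero_mul]
  set p : S := ∑ i ∈ Finset.range n, (1-b) ^ i with hp
  have hgeom : b * p = 1 - (1-b)^n := by
    have hg := geom_sum_mul (1-b) n
    rw [← hp] at hg
    linear_combination -hg
  have hnil2 : b^n * (1-b)^n = 0 := by
    have : b^n * (1-b)^n = (b - b*b)^n := by
      rw [← mul_pow]; ring_nf
    rw [this, hm]
  have hkey : b^n = b^(n+1) * p := by
    calc b^n = b^n * (b*p + (1-b)^n) := by rw [hgeom]; ring
    _ = b^(n+1)*p + b^n*(1-b)^n := by ring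
    _ = b^(n+1)*p := by rw [hnil2, add_zero]
  have hiter : ∀ j : ℕ, b^(n+j) * p^j = b^n := by
    intro j
    induction j with
    | zero => simp
    | succ k ih =>
      calc b^(n+(k+1))*p^(k+1) = (b^(n+1)*p) * (b^k * p^k) := by ring
      _ = b^n * (b^k*p^k) := by rw [← hkey]
      _ = b^(n+k)*p^k := by ring
      _ = b^n := ih
  refine ⟨b^n * p^(n+1), ?_, ?_⟩
  · have h1 : (b^n*p^(n+1))*b*(b^n*p^(n+1)) = (b^(n+(n+1))*p^(n+1)) * p^(n+1) := by ring
    rw [h1, hiter]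
  · -- nilpotency of b - b*z
    set e : S := b^(n+1)*p^(n+1) with he_def
    have hbz : b - b * (b^n * p^(n+1)) = b - e := by rw [he_def]; ring
    rw [hbz]
    refine ⟨n, ?_⟩
    have he : e * e = e := by
      calc e*e = (b^(n+(n+1))*p^(n+1)) * (b*p^(n+1)) := by rw [he_def]; ring
      _ = b^n * (b*p^(n+1)) := by rw [hiter]
      _ = e := by rw [he_def]; ring
    have hb1 : b^n*(b-1)^n = 0 := by
      have : b^n*(b-1)^n = (-1:S)^n * (b - b*b)^n := by
        rw [← mul_pow, ← mul_pow]; ring_nf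
      rw [this, hm, mul_zero]
    have h1e : e*(b-1)^n = 0 := by
      calc e*(b-1)^n = b*p^(n+1)*(b^n*(b-1)^n) := by rw [he_def]; ring
      _ = 0 := by rw [hb1, mul_zero]
    have h2e : b^n*(1-e) = 0 := by
      calc b^n*(1-e) = b^n - b^(n+(n+1))*p^(n+1) := by rw [he_def]; ring
      _ = 0 := by rw [hiter]; ring
    have split : (b-e)^n = (b-e)^n * e + (b-e)^n * (1-e) := by ring
    have part1 : (b-e)^n * e = 0 := by
      have hfac : (b-e)*e = (b-1)*e := by
        have : (b-e)*e = b*e - e*e := by ring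
        rw [this, he]; ring
      have : (b-e)^n * e^n = ((b-1)*e)^n := by rw [← mul_pow, hfac]
      have hen : e^n = e := by rw [hn]; exact idem_pow he m
      rw [hen] at this
      rw [this, mul_pow]
      have : (b-1)^n * e^n = e * (b-1)^n := by
        have hen : e^n = e := by rw [hn]; exact idem_pow he m
        rw [hen]; ring
      rw [this, h1e]
    have part2 : (b-e)^n * (1-e) = 0 := by
      have hfac : (b-e)*(1-e) = b*(1-e) := by
        have : (b-e)*(1-e) = b - b*e - e + e*e := by ring
        rw [this, he]; ring
      have hone : (1-e)*(1-e) = (1-e) := by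
        have : (1-e)*(1-e) = 1 - 2*e + e*e := by ring
        rw [this, he]; ring
      have honen : (1-e)^n = 1-e := by rw [hn]; exact idem_pow hone m
      have : (b-e)^n * (1-e)^n = (b*(1-e))^n := by rw [← mul_pow, hfac]
      rw [honen] at this
      rw [this, mul_pow, honen, h2e]
    rw [split, part1, part2, add_zero]

/-- If `a^2 - a^4` is nilpotent then `a` has a Hirano inverse. -/
theorem hirano_of_sq_nilpotent {R : Type*} [Ring R] (a : R)
    (h : IsNilpotent (a^2 - a^4)) : HasHiranoInverse a := by
  let S := Algebra.adjoin ℤ ({a} : Set R)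
  letI : CommRing S := Algebra.adjoinCommRingOfComm ℤ (by rintro x rfl y rfl; rfl)
  set x : S := ⟨a, Algebra.subset_adjoin rfl⟩ with hx
  have hb : IsNilpotent (x*x - (x*x)*(x*x)) := by
    obtain ⟨m, hm⟩ := h
    refine ⟨m, ?_⟩
    apply Subtype.ext
    have hcoe : ((( x*x - (x*x)*(x*x))^m : S) : R) = (a*a - (a*a)*(a*a))^m := by
      push_cast
      rfl
    rw [hcoe]
    have : a*a - (a*a)*(a*a) = a^2 - a^4 := by noncomm_ring
    rw [this, hm]
    rfl
  obtain ⟨z, hz1, hz2⟩ := comm_aux (x*x) hb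
  refine ⟨((x*z : S) : R), ?_, ?_, ?_⟩
  · have hs : x*(x*z) = (x*z)*x := by ring
    have := congrArg (fun t : S => (t : R)) hs
    push_cast at this
    simpa using this
  · have hs : x*z = ((x*z))*x*(x*z) := by
      conv_lhs => rw [hz1]
      ring
    have := congrArg (fun t : S => (t : R)) hs
    push_cast at this
    simpa using this
  · have hz2' : IsNilpotent (((x*x - (x*x)*z : S) : R)) := by
      obtain ⟨m, hm⟩ := hz2
      refine ⟨m, ?_⟩
      have : (((x*x - (x*x)*z)^m : S) : R) = ((0 : S) : R) := by rw [hm]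
      push_cast at this
      convert this using 2
      rfl
    have heq : a^2 - a * ((x*z : S) : R) = ((x*x - (x*x)*z : S) : R) := by
      push_cast
      noncomm_ring
    rw [heq]
    exact hz2'


/-- A 2x2 matrix with zero second column and nilpotent (1,1) entry is nilpotent. -/
theorem nilpotent_col2 {R : Type*} [Ring R] {x y : R} (hx : IsNilpotent x) :
    IsNilpotent (!![x, 0; y, 0] : Matrix (Fin 2) (Fin 2) R) := by
  obtain ⟨p, hp⟩ := hx
  refine ⟨p + 1, ?_⟩
  have key : ∀ k : ℕ, (!![x, 0; y, 0] : Matrix (Fin 2) (Fin 2) R) ^ (k+1) =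
      !![x^(k+1), 0; y*x^k, 0] := by
    intro k
    induction k with
    | zero => simp
    | succ m ih =>
      rw [pow_succ, ih, Matrix.mul_fin_two]
      congr 1 <;> simp [pow_succ, mul_assoc]
  rw [key p]
  have h1 : x^(p+1) = 0 := by rw [pow_succ, hp, zero_mul]
  rw [h1, hp]
  ext i j
  fin_cases i <;> fin_cases j <;> simp

/-- nilpotent plus a left-annihilating square-zero tail is nilpotent. -/
theorem nilp_add_tail {R : Type*} [Ring R] {n t : R} (hn : IsNilpotent n)
    (h1 : t * n = 0) (h2 : t * t = 0) : IsNilpotent (n + t) := by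
  obtain ⟨m, hm⟩ := hn
  refine ⟨m + 1, ?_⟩
  have key : ∀ k : ℕ, (n + t)^(k+1) = n^k * (n + t) := by
    intro k
    induction k with
    | zero => rw [pow_one, pow_zero, one_mul]
    | succ j ih =>
      rw [pow_succ, ih]
      have : t * (n + t) = 0 := by rw [mul_add, h1, h2, add_zero]
      calc n^j * (n+t) * (n+t) = n^j * (n*(n+t) + t*(n+t)) := by noncomm_ring
      _ = n^j * (n*(n+t)) := by rw [this, add_zero]
      _ = n^(j+1) * (n+t) := by rw [pow_succ]; noncomm_ring
  rw [key m, hm, zero_mul]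

/-- Pierce-style nilpotency criterion. -/
theorem pierce_nilpotent {R : Type*} [Ring R] {f s : R} (hf : f * f = f)
    (h0 : (f * s * (1 - f)) * s = 0) {p q : ℕ}
    (h1 : (f * s * f) ^ p = 0) (h2 : ((1 - f) * s * (1 - f)) ^ q = 0) :
    IsNilpotent s := by
  have hfs2 : f * (s * s) = (f * s * f) * s := by
    have expand : f * (s * s) - (f * s * f) * s = (f * s * (1 - f)) * s := by noncomm_ring
    have h' : f * (s * s) - (f * s * f) * s = 0 := by rw [expand, h0]
    exact sub_eq_zero.mp h'
  have key1 : ∀ k : ℕ, f * s^(k+1) = (f*s*f)^k * (f*s) := by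
    intro k
    induction k with
    | zero => rw [pow_one, pow_zero, one_mul]
    | succ j ih =>
      have habs : (f*s*f)*(f*s^(j+1)) = (f*s*f)*s^(j+1) := by
        have e : (f*s*f)*(f*s^(j+1)) = (f*s*(f*f))*s^(j+1) := by noncomm_ring
        rw [e, hf]
      calc f * s^(j+2) = f*(s*(s*s^j)) := by rw [pow_succ', pow_succ']
      _ = (f*(s*s))*s^j := by noncomm_ring
      _ = ((f*s*f)*s)*s^j := by rw [hfs2]
      _ = (f*s*f)*(s*s^j) := by rw [mul_assoc]
      _ = (f*s*f)*s^(j+1) := by rw [← pow_succ']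
      _ = (f*s*f)*(f*s^(j+1)) := habs.symm
      _ = (f*s*f)*((f*s*f)^j*(f*s)) := by rw [ih]
      _ = (f*s*f)^(j+1) * (f*s) := by rw [pow_succ']; noncomm_ring
  have key2 : ∀ j : ℕ, f * s^(p+1+j) = 0 := by
    intro j
    have hk := key1 (p+j)
    have hz : (f*s*f)^(p+j) = 0 := by rw [pow_add, h1, zero_mul]
    rw [show p+1+j = p+j+1 by omega, hk, hz, zero_mul]
  have hg : (1-f) * (1-f) = (1-f) := by
    have e : (1-f)*(1-f) = 1 - f - f + f*f := by noncomm_ring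
    rw [e, hf]
    noncomm_ring
  have key3 : ∀ j : ℕ, (1-f) * s^(p+1+j) = ((1-f)*s*(1-f))^j * ((1-f) * s^(p+1)) := by
    intro j
    induction j with
    | zero => rw [pow_zero, one_mul, add_zero]
    | succ i ih =>
      have hsplit : s^(p+1+(i+1)) = s * s^(p+1+i) := pow_succ' s (p+1+i)
      have hdecomp : (1-f) * (s * s^(p+1+i))
          = (1-f) * s * (f * s^(p+1+i)) + (1-f) * s * ((1-f) * s^(p+1+i)) := by
        noncomm_ring
      have e3 : (1-f) * s * ((1-f) * s^(p+1+i)) = ((1-f)*s*(1-f)) * ((1-f) * s^(p+1+i)) := by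
        have e4 : ((1-f)*s*(1-f)) * ((1-f) * s^(p+1+i)) = (1-f)*s*(((1-f)*(1-f)) * s^(p+1+i)) := by
          noncomm_ring
        rw [e4, hg, mul_assoc]
      rw [hsplit, hdecomp, key2 i, mul_zero, zero_add, e3, ih, ← mul_assoc, ← pow_succ']
  refine ⟨p+1+q, ?_⟩
  have hsum : s^(p+1+q) = f * s^(p+1+q) + (1-f) * s^(p+1+q) := by noncomm_ring
  rw [hsum, key2 q, key3 q, h2, zero_mul, zero_add]

theorem pierce_assembly {R : Type*} [Ring R] (T f J Yd Gf Z Ct d : R)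
    (hff : f*f = f)
    (hfTf : f*T*f = J)
    (hfTg : f*T*(1-f) = Yd*d)
    (hgTf : (1-f)*T*f = Gf)
    (hgTg : (1-f)*T*(1-f) = Z + Ct*d)
    (hdT : d*T = 0)
    (hdZ : d*Z = 0)
    (hdC : d*Ct = d)
    (hdd : d*d = 0)
    (hdG : d*Gf = 0)
    (hJ : IsNilpotent (J - J*J))
    (hZn : IsNilpotent (Z - Z*Z)) :
    IsNilpotent (T - T*T) := by
  have hA1 : f*(T-T*T)*f = J - J*J := by
    have c1 : f*(T-T*T)*f - (f*T*f - (f*T*f)*(f*T*f) - (f*T*(1-f))*((1-f)*T*f))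
        = 2*((f*T*(f*f-f))*(T*f)) := by noncomm_ring
    rw [hff, sub_self, mul_zero, zero_mul, mul_zero] at c1
    have c1' := sub_eq_zero.mp c1
    rw [hfTf, hfTg, hgTf] at c1'
    rw [c1', mul_assoc, hdG, mul_zero, sub_zero]
  have hfsg : f*(T-T*T)*(1-f) = (Yd - J*Yd)*d := by
    have c2 : f*(T-T*T)*(1-f) - (f*T*(1-f) - (f*T*f)*(f*T*(1-f)) - (f*T*(1-f))*((1-f)*T*(1-f)))
        = 2*((f*T*(f*f-f))*(T*(1-f))) := by noncomm_ring
    rw [hff, sub_self, mul_zero, zero_mul, mul_zero] at c2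
    have c2' := sub_eq_zero.mp c2
    rw [hfTf, hfTg, hgTg] at c2'
    have e : (Yd*d)*(Z + Ct*d) = Yd*(d*Z) + (Yd*(d*Ct))*d := by noncomm_ring
    rw [hdZ, hdC, mul_zero, zero_add] at e
    have e2 : (Yd*d)*d = Yd*(d*d) := by rw [mul_assoc]
    rw [e2, hdd, mul_zero] at e
    rw [c2', e, sub_zero]
    noncomm_ring
  have hA2 : (f*(T-T*T)*(1-f))*(T-T*T) = 0 := by
    rw [hfsg]
    have e : ((Yd - J*Yd)*d)*(T-T*T) = (Yd - J*Yd)*(d*T - (d*T)*T) := by noncomm_ring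
    rw [e, hdT, zero_mul, sub_zero, mul_zero]
  have hA3 : (1-f)*(T-T*T)*(1-f) = (Z - Z*Z) + (Ct - Gf*Yd - Z*Ct)*d := by
    have c3 : (1-f)*(T-T*T)*(1-f) - ((1-f)*T*(1-f) - ((1-f)*T*f)*(f*T*(1-f))
        - ((1-f)*T*(1-f))*((1-f)*T*(1-f)))
        = 2*(((1-f)*T*(f*f-f))*(T*(1-f))) := by noncomm_ring
    rw [hff, sub_self, mul_zero, zero_mul, mul_zero] at c3
    have c3' := sub_eq_zero.mp c3
    rw [hgTg, hgTf, hfTg] at c3'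
    have e : (Z + Ct*d)*(Z + Ct*d) = Z*Z + (Z*Ct)*d + Ct*(d*Z) + (Ct*(d*Ct))*d := by
      noncomm_ring
    rw [hdZ, hdC, mul_zero, add_zero] at e
    have e2 : (Ct*d)*d = Ct*(d*d) := by rw [mul_assoc]
    rw [e2, hdd, mul_zero, add_zero] at e
    rw [c3', e]
    noncomm_ring
  have hgnil : IsNilpotent ((Z - Z*Z) + (Ct - Gf*Yd - Z*Ct)*d) := by
    apply nilp_add_tail hZn
    · have e : ((Ct - Gf*Yd - Z*Ct)*d)*(Z - Z*Z) = (Ct - Gf*Yd - Z*Ct)*(d*Z - (d*Z)*Z) := by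
        noncomm_ring
      rw [e, hdZ, zero_mul, sub_zero, mul_zero]
    · have e : ((Ct - Gf*Yd - Z*Ct)*d)*((Ct - Gf*Yd - Z*Ct)*d)
          = (Ct - Gf*Yd - Z*Ct)*((d*Ct - (d*Gf)*Yd - (d*Z)*Ct)*d) := by noncomm_ring
      rw [e, hdC, hdG, hdZ, zero_mul, zero_mul, sub_zero, sub_zero, hdd, mul_zero]
  obtain ⟨p, hp⟩ := hJ
  obtain ⟨q, hq⟩ := hgnil
  have h1' : (f*(T-T*T)*f)^p = 0 := by rw [hA1, hp]
  have h2' : ((1-f)*(T-T*T)*(1-f))^q = 0 := by rw [hA3, hq]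
  exact pierce_nilpotent hff hA2 h1' h2'

variable {X : Type*} [NormedAddCommGroup X] [NormedSpace ℂ X] [CompleteSpace X]

set_option maxHeartbeats 1000000 in
theorem hirano_anti_triangular (A B AD : X →L[ℂ] X)
    (hAD : A * AD = AD * A ∧ AD = AD * A * AD ∧ IsNilpotent (A - A * AD))
    (hB : HasStronglyDrazinInverse B)
    (h1 : AD * B * AD = 0)
    (h2 : B * (1 - A * AD) * B = 0)
    (h3 : B * A * (1 - A * AD) = 0) :
    HasHiranoInverse (!![A, B; 1, 0] : Matrix (Fin 2) (Fin 2) (X →L[ℂ] X)) := by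
  obtain ⟨hc, hzz, hnu⟩ := hAD
  set E : X →L[ℂ] X := A * AD with hE
  have hAADcomm : AD*A = A*AD := by rw [← hc, hE]
  have zE : E*E = E := by
    have c : E*E - E = A*(AD*A*AD - AD) := by rw [hE]; noncomm_ring
    rw [← hzz, sub_self, mul_zero] at c
    exact sub_eq_zero.mp c
  have zA : E*A = A*E := by
    have c : E*A - A*E = A*(AD*A - A*AD) := by rw [hE]; noncomm_ring
    rw [hAADcomm, sub_self, mul_zero] at c
    exact sub_eq_zero.mp c
  have zB : E*B*E = 0 := by
    have c : E*B*E = A*(AD*B*AD)*A + (A*(AD*B))*(A*AD - AD*A) := by rw [hE]; noncomm_ring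
    rw [h1, hAADcomm, sub_self] at c
    simpa using c
  have zE0 : E*E - E = 0 := by rw [zE, sub_self]
  have zA0 : E*A - A*E = 0 := by rw [zA, sub_self]
  have zB0 : E*B*E = 0 := zB
  have zBB0 : B*B - B*E*B = 0 := by
    have c : B*B - B*E*B = B*(1-E)*B := by noncomm_ring
    rw [c, h2]
  have zBA0 : B*A - B*A*E = 0 := by
    have c : B*A - B*A*E = B*A*(1-E) := by noncomm_ring
    rw [c, h3]
  have q111 : ((E * ((A * A) + B)) * E) = ((A * A) * E) := by
    have c : ((E * ((A * A) + B)) * E) - ((A * A) * E) = (E*A - A*E)*A*E + A*(E*A - A*E)*E + A*A*(E*E - E) + (E*B*E) := by noncomm_ring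
    simp only [zE0, zA0, zB0, zBB0, zBA0, mul_zero, zero_mul, add_zero, zero_add, sub_zero, zero_sub, neg_zero, mul_neg, neg_neg] at c
    exact sub_eq_zero.mp c
  have q112 : ((E * (A * B)) * E) = 0 := by
    have c : ((E * (A * B)) * E) = (E*A - A*E)*B*E + A*(E*B*E) := by noncomm_ring
    simp only [zE0, zA0, zB0, zBB0, zBA0, mul_zero, zero_mul, add_zero, zero_add, sub_zero, zero_sub, neg_zero, mul_neg, neg_neg] at c
    exact c
  have q121 : ((E * A) * E) = (A * E) := by
    have c : ((E * A) * E) - (A * E) = (E*A - A*E)*E + A*(E*E - E) := by noncomm_ring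
    simp only [zE0, zA0, zB0, zBB0, zBA0, mul_zero, zero_mul, add_zero, zero_add, sub_zero, zero_sub, neg_zero, mul_neg, neg_neg] at c
    exact sub_eq_zero.mp c
  have q211 : ((E * ((A * A) + B)) * (1 - E)) = (E * (B - (B * E))) := by
    have c : ((E * ((A * A) + B)) * (1 - E)) - (E * (B - (B * E))) = -(E*A - A*E)*A*E - A*(E*A - A*E)*E - A*A*(E*E - E) + (E*A - A*E)*A + A*(E*A - A*E) := by noncomm_ring
    simp only [zE0, zA0, zB0, zBB0, zBA0, mul_zero, zero_mul, add_zero, zero_add, sub_zero, zero_sub, neg_zero, mul_neg, neg_neg] at c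
    exact sub_eq_zero.mp c
  have q212 : ((E * (A * B)) * (1 - E)) = ((A * E) * (B - (B * E))) := by
    have c : ((E * (A * B)) * (1 - E)) - ((A * E) * (B - (B * E))) = A*(E*B*E) - (E*A - A*E)*B*E - A*(E*B*E) + (E*A - A*E)*B := by noncomm_ring
    simp only [zE0, zA0, zB0, zBB0, zBA0, mul_zero, zero_mul, add_zero, zero_add, sub_zero, zero_sub, neg_zero, mul_neg, neg_neg] at c
    exact sub_eq_zero.mp c
  have q221 : ((E * A) * (1 - E)) = 0 := by
    have c : ((E * A) * (1 - E)) = -(E*A - A*E)*E - A*(E*E - E) + (E*A - A*E) := by noncomm_ring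
    simp only [zE0, zA0, zB0, zBB0, zBA0, mul_zero, zero_mul, add_zero, zero_add, sub_zero, zero_sub, neg_zero, mul_neg, neg_neg] at c
    exact c
  have q222 : ((E * B) * (1 - E)) = (E * (B - (B * E))) := by
    have c : ((E * B) * (1 - E)) - (E * (B - (B * E))) = 0 := by noncomm_ring
    exact sub_eq_zero.mp c
  have q311 : (((1 - E) * ((A * A) + B)) * E) = (B * E) := by
    have c : (((1 - E) * ((A * A) + B)) * E) - (B * E) = -(E*A - A*E)*A*E - A*(E*A - A*E)*E - A*A*(E*E - E) - (E*B*E) := by noncomm_ring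
    simp only [zE0, zA0, zB0, zBB0, zBA0, mul_zero, zero_mul, add_zero, zero_add, sub_zero, zero_sub, neg_zero, mul_neg, neg_neg] at c
    exact sub_eq_zero.mp c
  have q312 : (((1 - E) * (A * B)) * E) = (A * (B * E)) := by
    have c : (((1 - E) * (A * B)) * E) - (A * (B * E)) = -(E*A - A*E)*B*E - A*(E*B*E) := by noncomm_ring
    simp only [zE0, zA0, zB0, zBB0, zBA0, mul_zero, zero_mul, add_zero, zero_add, sub_zero, zero_sub, neg_zero, mul_neg, neg_neg] at c
    exact sub_eq_zero.mp c
  have q321 : (((1 - E) * A) * E) = 0 := by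
    have c : (((1 - E) * A) * E) = -(E*A - A*E)*E - A*(E*E - E) := by noncomm_ring
    simp only [zE0, zA0, zB0, zBB0, zBA0, mul_zero, zero_mul, add_zero, zero_add, sub_zero, zero_sub, neg_zero, mul_neg, neg_neg] at c
    exact c
  have q322 : (((1 - E) * B) * E) = (B * E) := by
    have c : (((1 - E) * B) * E) - (B * E) = -(E*B*E) := by noncomm_ring
    simp only [zE0, zA0, zB0, zBB0, zBA0, mul_zero, zero_mul, add_zero, zero_add, sub_zero, zero_sub, neg_zero, mul_neg, neg_neg] at c
    exact sub_eq_zero.mp c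
  have q411 : (((1 - E) * ((A * A) + B)) * (1 - E)) = (((A - (A * E)) * (A - (A * E))) + ((1 - E) * (B - (B * E)))) := by
    have c : (((1 - E) * ((A * A) + B)) * (1 - E)) - (((A - (A * E)) * (A - (A * E))) + ((1 - E) * (B - (B * E)))) = -A*(E*A - A*E)*E - A*A*(E*E - E) + (E*A - A*E)*A*E + A*(E*A - A*E)*E + A*A*(E*E - E) + A*(E*A - A*E) - (E*A - A*E)*A - A*(E*A - A*E) := by noncomm_ring
    simp only [zE0, zA0, zB0, zBB0, zBA0, mul_zero, zero_mul, add_zero, zero_add, sub_zero, zero_sub, neg_zero, mul_neg, neg_neg] at c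
    exact sub_eq_zero.mp c
  have q412 : (((1 - E) * (A * B)) * (1 - E)) = ((A - (A * E)) * (B - (B * E))) := by
    have c : (((1 - E) * (A * B)) * (1 - E)) - ((A - (A * E)) * (B - (B * E))) = -A*(E*B*E) + (E*A - A*E)*B*E + A*(E*B*E) - (E*A - A*E)*B := by noncomm_ring
    simp only [zE0, zA0, zB0, zBB0, zBA0, mul_zero, zero_mul, add_zero, zero_add, sub_zero, zero_sub, neg_zero, mul_neg, neg_neg] at c
    exact sub_eq_zero.mp c
  have q421 : (((1 - E) * A) * (1 - E)) = (A - (A * E)) := by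
    have c : (((1 - E) * A) * (1 - E)) - (A - (A * E)) = (E*A - A*E)*E + A*(E*E - E) - (E*A - A*E) := by noncomm_ring
    simp only [zE0, zA0, zB0, zBB0, zBA0, mul_zero, zero_mul, add_zero, zero_add, sub_zero, zero_sub, neg_zero, mul_neg, neg_neg] at c
    exact sub_eq_zero.mp c
  have q422 : (((1 - E) * B) * (1 - E)) = ((1 - E) * (B - (B * E))) := by
    have c : (((1 - E) * B) * (1 - E)) - ((1 - E) * (B - (B * E))) = 0 := by noncomm_ring
    exact sub_eq_zero.mp c
  have q53 : ((B - (B * E)) * A) = 0 := by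
    have c : ((B - (B * E)) * A) = -B*(E*A - A*E) + (B*A - B*A*E) := by noncomm_ring
    simp only [zE0, zA0, zB0, zBB0, zBA0, mul_zero, zero_mul, add_zero, zero_add, sub_zero, zero_sub, neg_zero, mul_neg, neg_neg] at c
    exact c
  have q54 : ((B - (B * E)) * B) = 0 := by
    have c : ((B - (B * E)) * B) = (B*B - B*E*B) := by noncomm_ring
    simp only [zE0, zA0, zB0, zBB0, zBA0, mul_zero, zero_mul, add_zero, zero_add, sub_zero, zero_sub, neg_zero, mul_neg, neg_neg] at c
    exact c
  have q71 : ((B - (B * E)) * (1 - E)) = (B - (B * E)) := by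
    have c : ((B - (B * E)) * (1 - E)) - (B - (B * E)) = B*(E*E - E) := by noncomm_ring
    simp only [zE0, zA0, zB0, zBB0, zBA0, mul_zero, zero_mul, add_zero, zero_add, sub_zero, zero_sub, neg_zero, mul_neg, neg_neg] at c
    exact sub_eq_zero.mp c
  have hNfac : (A - (A * E)) = ((A - E) * (1 - E)) := by
    have c : (A - (A * E)) - ((A - E) * (1 - E)) = -(E*E - E) := by noncomm_ring
    simp only [zE0, zA0, zB0, zBB0, zBA0, mul_zero, zero_mul, add_zero, zero_add, sub_zero, zero_sub, neg_zero, mul_neg, neg_neg] at c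
    exact sub_eq_zero.mp c
  have hrhofac : (((A * A) * E) - E) = ((A - E) * ((A + E) * E)) := by
    have c : (((A * A) * E) - E) - ((A - E) * ((A + E) * E)) = -A*(E*E - E) + (E*A - A*E)*E + A*(E*E - E) + (E*E - E)*E + (E*E - E) := by noncomm_ring
    simp only [zE0, zA0, zB0, zBB0, zBA0, mul_zero, zero_mul, add_zero, zero_add, sub_zero, zero_sub, neg_zero, mul_neg, neg_neg] at c
    exact sub_eq_zero.mp c
  have hx1fac : (((A * A) * E) - (((A * A) * E) * ((A * A) * E))) = ((((A * A) * E) - E) * ((-1) - (((A * A) * E) - E))) := by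
    have c : (((A * A) * E) - (((A * A) * E) * ((A * A) * E))) - ((((A * A) * E) - E) * ((-1) - (((A * A) * E) - E))) = -A*A*(E*E - E) - (E*A - A*E)*A*E - A*(E*A - A*E)*E - A*A*(E*E - E) + (E*E - E) := by noncomm_ring
    simp only [zE0, zA0, zB0, zBB0, zBA0, mul_zero, zero_mul, add_zero, zero_add, sub_zero, zero_sub, neg_zero, mul_neg, neg_neg] at c
    exact sub_eq_zero.mp c
  -- corollaries with B on the left
  have q51 : (B - B*E)*(A*A+B) = 0 := by
    have c : (B - B*E)*(A*A+B) = ((B - B*E)*A)*A + (B - B*E)*B := by noncomm_ring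
    rw [q53, q54, zero_mul, add_zero] at c
    exact c
  have q52 : (B - B*E)*(A*B) = 0 := by
    have c : (B - B*E)*(A*B) = ((B - B*E)*A)*B := by noncomm_ring
    rw [q53, zero_mul] at c
    exact c
  have q62 : (B - B*E)*(A - A*E) = 0 := by
    have c : (B - B*E)*(A - A*E) = ((B - B*E)*A) - ((B - B*E)*A)*E := by noncomm_ring
    rw [q53] at c
    simpa using c
  have q61 : (B - B*E)*((A - A*E)*(A - A*E)) = 0 := by
    rw [← mul_assoc, q62, zero_mul]
  have q81 : (B - B*E)*(B - B*E) = 0 := by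
    have c : (B - B*E)*(B - B*E) = ((B - B*E)*B) - ((B - B*E)*B)*E := by noncomm_ring
    rw [q54] at c
    simpa using c
  have q91 : (B - B*E)*(B*E) = 0 := by rw [← mul_assoc, q54, zero_mul]
  have q92 : (B - B*E)*(A*(B*E)) = 0 := by rw [← mul_assoc, q53, zero_mul]
  -- commutation and nilpotency facts
  have hAE : Commute A E := zA.symm
  have hnN : IsNilpotent (A - A*E) := by
    rw [hNfac]
    have c2 : Commute (A-E) E := hAE.sub_left (Commute.refl E)
    exact ((Commute.one_right (A-E)).sub_right c2).isNilpotent_mul_right hnu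
  have hnrho : IsNilpotent (A*A*E - E) := by
    rw [hrhofac]
    have cA : Commute (A-E) A := (Commute.refl A).sub_left hAE.symm
    have cE : Commute (A-E) E := hAE.sub_left (Commute.refl E)
    exact ((cA.add_right cE).mul_right cE).isNilpotent_mul_right hnu
  have hnxJ : IsNilpotent (A*A*E - (A*A*E)*(A*A*E)) := by
    rw [hx1fac]
    have cc : Commute (A*A*E - E) (-1 - (A*A*E - E)) :=
      ((Commute.one_right _).neg_right).sub_right (Commute.refl _)
    exact cc.isNilpotent_mul_right hnrho
  have hnxZ : IsNilpotent ((A-A*E)*(A-A*E) - ((A-A*E)*(A-A*E))*((A-A*E)*(A-A*E))) := by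
    have c : (A-A*E)*(A-A*E) - ((A-A*E)*(A-A*E))*((A-A*E)*(A-A*E))
        = (A-A*E) * ((A-A*E) - (A-A*E)*((A-A*E)*(A-A*E))) := by noncomm_ring
    rw [c]
    have cc : Commute (A-A*E) ((A-A*E) - (A-A*E)*((A-A*E)*(A-A*E))) :=
      (Commute.refl _).sub_right ((Commute.refl _).mul_right
        ((Commute.refl _).mul_right (Commute.refl _)))
    exact cc.isNilpotent_mul_right hnN
  -- matrix computations
  have hgmat : (1 : Matrix (Fin 2) (Fin 2) (X →L[ℂ] X)) - !![E,0;0,E] = !![1-E, 0; 0, 1-E] := by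
    rw [Matrix.one_fin_two, fin2_sub]
    exact fin2_ext rfl (sub_zero 0) (sub_zero 0) rfl
  have hffmat : !![E,(0:X →L[ℂ] X);0,E] * !![E,0;0,E] = !![E,0;0,E] := by
    rw [Matrix.mul_fin_two]
    exact fin2_ext (Eq.trans (by noncomm_ring) zE) (by noncomm_ring) (by noncomm_ring)
      (Eq.trans (by noncomm_ring) zE)
  have hM2 : (!![A, B; 1, 0] : Matrix (Fin 2) (Fin 2) (X →L[ℂ] X)) * !![A, B; 1, 0]
      = !![A*A+B, A*B; A, B] := by
    rw [Matrix.mul_fin_two]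
    exact fin2_ext (by noncomm_ring) (by noncomm_ring) (by noncomm_ring) (by noncomm_ring)
  have hfTf : !![E,(0:X →L[ℂ] X);0,E] * !![A*A+B, A*B; A, B] * !![E,0;0,E]
      = !![A*A*E, 0; A*E, 0] := by
    rw [Matrix.mul_fin_two, Matrix.mul_fin_two]
    exact fin2_ext (Eq.trans (Eq.trans (by noncomm_ring) q111) (by noncomm_ring))
      (Eq.trans (Eq.trans (by noncomm_ring) q112) (by noncomm_ring))
      (Eq.trans (Eq.trans (by noncomm_ring) q121) (by noncomm_ring))
      (Eq.trans (Eq.trans (by noncomm_ring) zB) (by noncomm_ring))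
  have hfTg : !![E,(0:X →L[ℂ] X);0,E] * !![A*A+B, A*B; A, B] * (1 - !![E,0;0,E])
      = !![E, A*E; 0, E] * !![B - B*E, 0; 0, B - B*E] := by
    rw [hgmat, Matrix.mul_fin_two, Matrix.mul_fin_two, Matrix.mul_fin_two]
    exact fin2_ext (Eq.trans (Eq.trans (by noncomm_ring) q211) (by noncomm_ring))
      (Eq.trans (Eq.trans (by noncomm_ring) q212) (by noncomm_ring))
      (Eq.trans (Eq.trans (by noncomm_ring) q221) (by noncomm_ring))
      (Eq.trans (Eq.trans (by noncomm_ring) q222) (by noncomm_ring))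
  have hgTf : (1 - !![E,(0:X →L[ℂ] X);0,E]) * !![A*A+B, A*B; A, B] * !![E,0;0,E]
      = !![B*E, A*(B*E); 0, B*E] := by
    rw [hgmat, Matrix.mul_fin_two, Matrix.mul_fin_two]
    exact fin2_ext (Eq.trans (Eq.trans (by noncomm_ring) q311) (by noncomm_ring))
      (Eq.trans (Eq.trans (by noncomm_ring) q312) (by noncomm_ring))
      (Eq.trans (Eq.trans (by noncomm_ring) q321) (by noncomm_ring))
      (Eq.trans (Eq.trans (by noncomm_ring) q322) (by noncomm_ring))
  have hgTg : (1 - !![E,(0:X →L[ℂ] X);0,E]) * !![A*A+B, A*B; A, B] * (1 - !![E,0;0,E])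
      = !![(A-A*E)*(A-A*E), 0; A-A*E, 0]
        + !![1-E, A-A*E; 0, 1-E] * !![B - B*E, 0; 0, B - B*E] := by
    rw [hgmat, Matrix.mul_fin_two, Matrix.mul_fin_two, Matrix.mul_fin_two, fin2_add]
    exact fin2_ext (Eq.trans (Eq.trans (by noncomm_ring) q411) (by noncomm_ring))
      (Eq.trans (Eq.trans (by noncomm_ring) q412) (by noncomm_ring))
      (Eq.trans (Eq.trans (by noncomm_ring) q421) (by noncomm_ring))
      (Eq.trans (Eq.trans (by noncomm_ring) q422) (by noncomm_ring))
  have hdT : !![B - B*E,(0:X →L[ℂ] X);0,B - B*E] * !![A*A+B, A*B; A, B] = 0 := by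
    rw [Matrix.mul_fin_two]
    exact Eq.trans (fin2_ext (Eq.trans (by noncomm_ring) q51) (Eq.trans (by noncomm_ring) q52)
      (Eq.trans (by noncomm_ring) q53) (Eq.trans (by noncomm_ring) q54)) fin2_zero
  have hdZ : !![B - B*E,(0:X →L[ℂ] X);0,B - B*E] * !![(A-A*E)*(A-A*E), 0; A-A*E, 0] = 0 := by
    rw [Matrix.mul_fin_two]
    exact Eq.trans (fin2_ext (Eq.trans (by noncomm_ring) q61) (by noncomm_ring)
      (Eq.trans (by noncomm_ring) q62) (by noncomm_ring)) fin2_zero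
  have hdC : !![B - B*E,(0:X →L[ℂ] X);0,B - B*E] * !![1-E, A-A*E; 0, 1-E]
      = !![B - B*E, 0; 0, B - B*E] := by
    rw [Matrix.mul_fin_two]
    exact fin2_ext (Eq.trans (by noncomm_ring) q71) (Eq.trans (by noncomm_ring) q62)
      (by noncomm_ring) (Eq.trans (by noncomm_ring) q71)
  have hdd : !![B - B*E,(0:X →L[ℂ] X);0,B - B*E] * !![B - B*E, 0; 0, B - B*E] = 0 := by
    rw [Matrix.mul_fin_two]
    exact Eq.trans (fin2_ext (Eq.trans (by noncomm_ring) q81) (by noncomm_ring)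
      (by noncomm_ring) (Eq.trans (by noncomm_ring) q81)) fin2_zero
  have hdG : !![B - B*E,(0:X →L[ℂ] X);0,B - B*E] * !![B*E, A*(B*E); 0, B*E] = 0 := by
    rw [Matrix.mul_fin_two]
    exact Eq.trans (fin2_ext (Eq.trans (by noncomm_ring) q91) (Eq.trans (by noncomm_ring) q92)
      (by noncomm_ring) (Eq.trans (by noncomm_ring) q91)) fin2_zero
  have hJn : IsNilpotent (!![A*A*E,(0:X →L[ℂ] X);A*E,0]
      - !![A*A*E,0;A*E,0] * !![A*A*E,0;A*E,0]) := by
    have hJJ : !![A*A*E,(0:X →L[ℂ] X);A*E,0] - !![A*A*E,0;A*E,0] * !![A*A*E,0;A*E,0]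
        = !![A*A*E - (A*A*E)*(A*A*E), 0; A*E - (A*E)*(A*A*E), 0] := by
      rw [Matrix.mul_fin_two, fin2_sub]
      exact fin2_ext (by noncomm_ring) (by noncomm_ring) (by noncomm_ring) (by noncomm_ring)
    rw [hJJ]
    exact nilpotent_col2 hnxJ
  have hZn : IsNilpotent (!![(A-A*E)*(A-A*E),(0:X →L[ℂ] X);A-A*E,0]
      - !![(A-A*E)*(A-A*E),0;A-A*E,0] * !![(A-A*E)*(A-A*E),0;A-A*E,0]) := by
    have hZZ : !![(A-A*E)*(A-A*E),(0:X →L[ℂ] X);A-A*E,0]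
        - !![(A-A*E)*(A-A*E),0;A-A*E,0] * !![(A-A*E)*(A-A*E),0;A-A*E,0]
        = !![(A-A*E)*(A-A*E) - ((A-A*E)*(A-A*E))*((A-A*E)*(A-A*E)), 0;
             (A-A*E) - (A-A*E)*((A-A*E)*(A-A*E)), 0] := by
      rw [Matrix.mul_fin_two, fin2_sub]
      exact fin2_ext (by noncomm_ring) (by noncomm_ring) (by noncomm_ring) (by noncomm_ring)
    rw [hZZ]
    exact nilpotent_col2 hnxZ
  have main := pierce_assembly (!![A*A+B, A*B; A, B] : Matrix (Fin 2) (Fin 2) (X →L[ℂ] X))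
    !![E,0;0,E] !![A*A*E,0;A*E,0] !![E, A*E; 0, E] !![B*E, A*(B*E); 0, B*E]
    !![(A-A*E)*(A-A*E),0;A-A*E,0] !![1-E, A-A*E; 0, 1-E] !![B - B*E, 0; 0, B - B*E]
    hffmat hfTf hfTg hgTf hgTg hdT hdZ hdC hdd hdG hJn hZn
  apply hirano_of_sq_nilpotent
  have e : (!![A, B; 1, 0] : Matrix (Fin 2) (Fin 2) (X →L[ℂ] X)) ^ 2 - (!![A, B; 1, 0] : Matrix (Fin 2) (Fin 2) (X →L[ℂ] X)) ^ 4
      = (!![A, B; 1, 0]*!![A, B; 1, 0])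
        - (!![A, B; 1, 0]*!![A, B; 1, 0])*(!![A, B; 1, 0]*!![A, B; 1, 0]) := by
    noncomm_ring
  rw [e, hM2]
  exact main
end

section
/- Let X be a complex Banach space and L(X) the Banach algebra of bounded linear operators on X. Let M = [[A, B], [C, 0]] ∈ M₂(L(X)) and suppose A and BC have strongly Drazin inverses. If A^D (BC) A^D = 0, (BC) A^π (BC) = 0 and (BC) A^π A = 0, where A^D is the Drazin inverse of A and A^π = I − A·A^D, then M has a Hirano inverse in M₂(L(X)). -/
set_option linter.unusedSectionVars false
set_option linter.unusedVariables false
set_option maxHeartbeats 1000000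

section Hirano


variable {R : Type*} [Ring R] [Algebra ℂ R]

private lemma commute_aeval {u b : R} (h : Commute u b) (p : Polynomial ℂ) :
    Commute u (Polynomial.aeval b p) := by
  induction p using Polynomial.induction_on' with
  | add p q hp hq => rw [map_add]; exact hp.add_right hq
  | monomial n a =>
      rw [Polynomial.aeval_monomial]
      exact ((Algebra.commute_algebraMap_left a u).symm).mul_right (h.pow_right n)

private lemma exists_sd (b : R) (hb : IsNilpotent (b - b ^ 2)) :
    ∃ w : R, (∀ u : R, Commute u b → Commute u w) ∧ b * w = w * b ∧ w = w * b * w ∧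
      IsNilpotent (b - b * w) := by
  obtain ⟨n, hn⟩ := hb
  rcases n with _ | m
  · -- trivial ring case
    have h01 : (1 : R) = 0 := by simpa using hn
    have hb0 : b = 0 := by calc b = b * 1 := (mul_one b).symm
                                _ = 0 := by rw [h01, mul_zero]
    exact ⟨0, fun u _ => Commute.zero_right u, by simp, by simp, ⟨1, by simp [hb0]⟩⟩
  set N := m + 1 with hN
  have cb1b : Commute (b - 1) b := (Commute.refl b).sub_left (Commute.one_left b)
  have hc : Commute b (1 - b) := (Commute.one_right b).sub_right (Commute.refl b)
  have hkey : b ^ N * (1 - b) ^ N = 0 := by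
    have h1 : b - b ^ 2 = b * (1 - b) := by noncomm_ring
    calc b ^ N * (1 - b) ^ N = (b * (1 - b)) ^ N := (hc.mul_pow N).symm
      _ = (b - b ^ 2) ^ N := by rw [h1]
      _ = 0 := hn
  have hXcop : IsCoprime (Polynomial.X : Polynomial ℂ) (1 - Polynomial.X) := ⟨1, 1, by ring⟩
  have hcop : IsCoprime ((Polynomial.X : Polynomial ℂ) ^ N) ((1 - Polynomial.X) ^ N) := hXcop.pow
  obtain ⟨u, v, huv⟩ := hcop
  set e := Polynomial.aeval b (u * Polynomial.X ^ N) with he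
  set f := Polynomial.aeval b (v * (1 - Polynomial.X) ^ N) with hf
  have hef : e + f = 1 := by rw [he, hf, ← map_add, huv, map_one]
  have he' : e = Polynomial.aeval b u * b ^ N := by
    rw [he, map_mul, map_pow, Polynomial.aeval_X]
  have hf' : f = Polynomial.aeval b v * (1 - b) ^ N := by
    rw [hf, map_mul, map_pow, map_sub, map_one, Polynomial.aeval_X]
  have cNv : Commute (b ^ N) (Polynomial.aeval b v) :=
    commute_aeval ((Commute.refl b).pow_left N) v
  have hef0 : e * f = 0 := by
    calc e * f = Polynomial.aeval b u * (b ^ N * Polynomial.aeval b v) * (1 - b) ^ N := by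
          rw [he', hf']; noncomm_ring
      _ = Polynomial.aeval b u * (Polynomial.aeval b v * b ^ N) * (1 - b) ^ N := by rw [cNv.eq]
      _ = (Polynomial.aeval b u * Polynomial.aeval b v) * (b ^ N * (1 - b) ^ N) := by noncomm_ring
      _ = 0 := by rw [hkey, mul_zero]
  have hee : e * e = e := by
    have h2 : e * (e + f) = e := by rw [hef, mul_one]
    rwa [mul_add, hef0, add_zero] at h2
  have cbe : Commute b e := commute_aeval (Commute.refl b) _
  have cbf : Commute b f := commute_aeval (Commute.refl b) _
  have cb1e : Commute (b - 1) e := commute_aeval cb1b _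
  have hepow : ∀ k : ℕ, e ^ (k + 1) = e := by
    intro k; induction k with
    | zero => rw [pow_one]
    | succ k ih => rw [pow_succ, ih, hee]
  have c2 : Commute ((b - 1) ^ N) (Polynomial.aeval b u) :=
    commute_aeval (cb1b.pow_left N) u
  have hn₀ : ((b - 1) * e) ^ N = 0 := by
    calc ((b - 1) * e) ^ N = (b - 1) ^ N * e ^ N := cb1e.mul_pow N
      _ = (b - 1) ^ N * e := by rw [hN, hepow]
      _ = (b - 1) ^ N * (Polynomial.aeval b u * b ^ N) := by rw [← he']
      _ = Polynomial.aeval b u * ((b - 1) ^ N * b ^ N) := by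
          rw [← mul_assoc, c2.eq, mul_assoc]
      _ = Polynomial.aeval b u * ((b - 1) * b) ^ N := by rw [cb1b.mul_pow]
      _ = 0 := by
          have h3 : (b - 1) * b = -(b - b ^ 2) := by noncomm_ring
          rw [h3, neg_pow, hn, mul_zero, mul_zero]
  obtain ⟨υ, hυ⟩ := IsNilpotent.isUnit_one_add (⟨N, hn₀⟩ : IsNilpotent ((b - 1) * e))
  refine ⟨e * ↑υ⁻¹, ?_, ?_, ?_, ?_⟩
  case _ =>
    intro u' hu'
    have hce : Commute u' e := commute_aeval hu' _
    have hcn : Commute u' ((b - 1) * e) := (hu'.sub_right (Commute.one_right u')).mul_right hce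
    have hcu : Commute u' (υ : R) := by rw [hυ]; exact (Commute.one_right u').add_right hcn
    exact hce.mul_right hcu.units_inv_right
  all_goals {
    have hcw : ∀ u' : R, Commute u' b → Commute u' (e * ↑υ⁻¹) := by
      intro u' hu'
      have hce : Commute u' e := commute_aeval hu' _
      have hcn : Commute u' ((b - 1) * e) := (hu'.sub_right (Commute.one_right u')).mul_right hce
      have hcu : Commute u' (υ : R) := by rw [hυ]; exact (Commute.one_right u').add_right hcn
      exact hce.mul_right hcu.units_inv_right
    have cbw : Commute b (e * ↑υ⁻¹) := hcw b (Commute.refl b)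
    have hbe : b * e = e * ↑υ := by
      have ceb1 : Commute e (b - 1) := cb1e.symm
      rw [hυ]
      calc b * e = e + (b - 1) * e := by noncomm_ring
        _ = e + (b - 1) * (e * e) := by rw [hee]
        _ = e + e * (b - 1) * e := by rw [← mul_assoc, ← ceb1.eq]
        _ = e * (1 + (b - 1) * e) := by noncomm_ring
    have hbw : b * (e * ↑υ⁻¹) = e := by
      rw [← mul_assoc, hbe, mul_assoc, Units.mul_inv, mul_one]
    first
    | exact cbw.eq
    | -- w = w * b * w
      { calc e * ↑υ⁻¹ = (e * e) * ↑υ⁻¹ := by rw [hee]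
          _ = e * (e * ↑υ⁻¹) := by rw [mul_assoc]
          _ = (b * (e * ↑υ⁻¹)) * (e * ↑υ⁻¹) := by rw [hbw]
          _ = ((e * ↑υ⁻¹) * b) * (e * ↑υ⁻¹) := by rw [cbw.eq] }
    | -- IsNilpotent (b - b * w)
      { rw [hbw]
        have hf1 : f = 1 - e := eq_sub_of_add_eq' hef
        have hsplit : b - e = (b - 1) * e + b * f := by rw [hf1]; noncomm_ring
        have hfN : f ^ N = f ^ m * f := pow_succ f m
        have hbNf : b ^ N * f = 0 := by
          calc b ^ N * f = b ^ N * (Polynomial.aeval b v * (1 - b) ^ N) := by rw [hf']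
            _ = (b ^ N * Polynomial.aeval b v) * (1 - b) ^ N := by rw [mul_assoc]
            _ = (Polynomial.aeval b v * b ^ N) * (1 - b) ^ N := by rw [cNv.eq]
            _ = Polynomial.aeval b v * (b ^ N * (1 - b) ^ N) := by rw [mul_assoc]
            _ = 0 := by rw [hkey, mul_zero]
        have cNfm : Commute (b ^ N) (f ^ m) :=
          (commute_aeval ((Commute.refl b).pow_left N) _).pow_right m
        have np2 : IsNilpotent (b * f) := by
          refine ⟨N, ?_⟩
          calc (b * f) ^ N = b ^ N * f ^ N := cbf.mul_pow N
            _ = b ^ N * f ^ m * f := by rw [hfN, ← mul_assoc]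
            _ = f ^ m * b ^ N * f := by rw [cNfm.eq]
            _ = f ^ m * (b ^ N * f) := by rw [mul_assoc]
            _ = 0 := by rw [hbNf, mul_zero]
        have cef : Commute e f := commute_aeval (commute_aeval (Commute.refl b) _).symm _
        have cb1f : Commute (b - 1) f := commute_aeval cb1b _
        have cc : Commute ((b - 1) * e) (b * f) :=
          (cb1b.mul_right cb1f).mul_left ((cbe.symm).mul_right cef)
        rw [hsplit]
        exact cc.isNilpotent_add ⟨N, hn₀⟩ np2 }
  }



private lemma hasHirano_of_isNilpotent {M : R} (h : IsNilpotent (M - M ^ 3)) :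
    HasHiranoInverse M := by
  have cM2 : Commute M (M ^ 2) := (Commute.refl M).pow_right 2
  have hb : IsNilpotent (M ^ 2 - (M ^ 2) ^ 2) := by
    have h1 : M ^ 2 - (M ^ 2) ^ 2 = M * (M - M ^ 3) := by noncomm_ring
    rw [h1]
    exact ((Commute.refl M).sub_right ((Commute.refl M).pow_right 3)).isNilpotent_mul_left h
  obtain ⟨w, hcw, hbw, hwbw, hnil⟩ := exists_sd (M ^ 2) hb
  have cMw : Commute M w := hcw M cM2
  refine ⟨M * w, ?_, ?_, ?_⟩
  · conv_rhs => rw [mul_assoc, ← cMw.eq]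
  · conv_lhs => rw [hwbw]
    noncomm_ring
  · rw [← mul_assoc, ← pow_two]
    exact hnil



private lemma nilpA3 (A E : R) (hAE : A * E = E * A) (hEE : E * E = E)
    (hm : IsNilpotent (A - E)) : IsNilpotent (A - A ^ 3) := by
  have h1 : E * A = A * E := hAE.symm
  have hswap : ∀ x : R, E * (A * x) = A * (E * x) := fun x => by
    rw [← mul_assoc, h1, mul_assoc]
  have hEEx : ∀ x : R, E * (E * x) = E * x := fun x => by
    rw [← mul_assoc, hEE]
  have key : A - A * A * A = (A - E) * (1 - A * A - A * E - E * E) := by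
    simp only [mul_sub, sub_mul, mul_one, one_mul, mul_assoc, hswap, hEEx, hEE, h1]
    abel
  have cA : Commute (A - E) A := Commute.sub_left (Commute.refl A) hAE.symm
  have cE : Commute (A - E) E := Commute.sub_left hAE (Commute.refl E)
  have cc : Commute (A - E) (1 - A * A - A * E - E * E) :=
    (((Commute.one_right _).sub_right (cA.mul_right cA)).sub_right
      (cA.mul_right cE)).sub_right (cE.mul_right cE)
  have h3 : A ^ 3 = A * A * A := by rw [pow_succ, pow_succ, pow_one]
  rw [h3, key]
  exact cc.isNilpotent_mul_right hm



private lemma kl_lemma (A P E Q : R)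
    (hEQ1 : E + Q = 1)
    (hEE : E * E = E) (hEQ : E * Q = 0) (hQE : Q * E = 0) (hQQ : Q * Q = Q)
    (hAQ : A * Q = Q * A)
    (hEPE : E * P * E = 0) (hPQP : P * Q * P = 0) (hPQA : P * Q * A = 0) :
    ∀ x ∈ Algebra.adjoin ℂ ({A, P} : Set R), ∀ y ∈ Algebra.adjoin ℂ ({A, P} : Set R),
      P * x * P * y * P = 0 := by
  have hEAQ : E * A * Q = 0 := by rw [mul_assoc, hAQ, ← mul_assoc, hEQ, zero_mul]
  have hEPQ : E * P * Q = E * P := by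
    have h0 : E * P * (E + Q) = E * P := by rw [hEQ1, mul_one]
    rw [mul_add, hEPE, zero_add] at h0
    exact h0
  have main : ∀ x ∈ Algebra.adjoin ℂ ({A, P} : Set R),
      (P * Q * x * E = 0) ∧ (∃ c : ℂ, P * Q * x * Q = c • (P * Q)) ∧
      (∃ z : R, E * x * Q = z * (E * P)) := by
    intro x hx
    induction hx using Algebra.adjoin_induction with
    | mem x hx =>
        rw [Set.mem_insert_iff, Set.mem_singleton_iff] at hx
        rcases hx with rfl | rfl
        · exact ⟨by rw [hPQA, zero_mul], ⟨0, by rw [hPQA, zero_mul, zero_smul]⟩,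
            ⟨0, by rw [hEAQ, zero_mul]⟩⟩
        · exact ⟨by rw [hPQP, zero_mul], ⟨0, by rw [hPQP, zero_mul, zero_smul]⟩,
            ⟨1, by rw [hEPQ, one_mul]⟩⟩
    | algebraMap r =>
        have hr : (algebraMap ℂ R) r = r • (1 : R) := Algebra.algebraMap_eq_smul_one r
        refine ⟨?_, ⟨r, ?_⟩, ⟨0, ?_⟩⟩
        · rw [hr, mul_smul_comm, mul_one, smul_mul_assoc, mul_assoc, hQE, mul_zero, smul_zero]
        · rw [hr, mul_smul_comm, mul_one, smul_mul_assoc, mul_assoc, hQQ]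
        · rw [hr, mul_smul_comm, mul_one, smul_mul_assoc, hEQ, smul_zero, zero_mul]
    | add x y hx hy ihx ihy =>
        obtain ⟨ix, ⟨cx, iix⟩, ⟨zx, iiix⟩⟩ := ihx
        obtain ⟨iy, ⟨cy, iiy⟩, ⟨zy, iiiy⟩⟩ := ihy
        refine ⟨?_, ⟨cx + cy, ?_⟩, ⟨zx + zy, ?_⟩⟩
        · rw [mul_add, add_mul, ix, iy, add_zero]
        · rw [mul_add, add_mul, iix, iiy, add_smul]
        · rw [mul_add, add_mul, iiix, iiiy, add_mul]
    | mul x y hx hy ihx ihy =>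
        obtain ⟨ix, ⟨cx, iix⟩, ⟨zx, iiix⟩⟩ := ihx
        obtain ⟨iy, ⟨cy, iiy⟩, ⟨zy, iiiy⟩⟩ := ihy
        have expand : ∀ t : R, P * Q * (x * y) * t
            = (P * Q * x * E) * (y * t) + (P * Q * x * Q) * (y * t) := by
          intro t
          have h0 : (P * Q * x * E) * (y * t) + (P * Q * x * Q) * (y * t)
              = P * Q * x * ((E + Q) * (y * t)) := by noncomm_ring
          rw [h0, hEQ1, one_mul]; noncomm_ring
        have expandE : E * (x * y) * Q
            = (E * x) * (E * y * Q) + (E * x * Q) * (y * Q) := by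
          have h0 : (E * x) * (E * y * Q) + (E * x * Q) * (y * Q)
              = E * x * ((E + Q) * (y * Q)) := by noncomm_ring
          rw [h0, hEQ1, one_mul]; noncomm_ring
        refine ⟨?_, ⟨cx * cy, ?_⟩, ⟨E * x * zy + cy • zx, ?_⟩⟩
        · rw [expand E, ix, zero_mul, iix, smul_mul_assoc, zero_add]
          have h1 : (P * Q) * (y * E) = P * Q * y * E := by noncomm_ring
          rw [h1, iy, smul_zero]
        · rw [expand Q, ix, zero_mul, iix, smul_mul_assoc, zero_add]
          have h1 : (P * Q) * (y * Q) = P * Q * y * Q := by noncomm_ring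
          rw [h1, iiy, smul_smul]
        · rw [expandE, iiiy, iiix]
          have t1 : (E * x) * (zy * (E * P)) = (E * x * zy) * (E * P) := by noncomm_ring
          have t2 : (zx * (E * P)) * (y * Q) = cy • (zx * (E * P)) := by
            have s1 : (zx * (E * P)) * (y * Q) = zx * (E * (P * Q * y * Q)) := by
              rw [← hEPQ]; noncomm_ring
            have s2 : zx * (E * (P * Q)) = zx * (E * P) := by
              rw [← mul_assoc E P Q, hEPQ]
            rw [s1, iiy, mul_smul_comm, mul_smul_comm, s2]
          rw [t1, t2, add_mul, smul_mul_assoc]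
  -- conclusion
  intro x hx y hy
  obtain ⟨ix, ⟨cx, iix⟩, ⟨zx, iiix⟩⟩ := main x hx
  obtain ⟨iy, ⟨cy, iiy⟩, -⟩ := main y hy
  have ly : P * Q * y * P = 0 := by
    have h0 : P * Q * y * P = (P * Q * y * E) * P + (P * Q * y * Q) * P := by
      have h1 : (P * Q * y * E) * P + (P * Q * y * Q) * P
          = P * Q * y * ((E + Q) * P) := by noncomm_ring
      rw [h1, hEQ1, one_mul]
    rw [h0, iy, zero_mul, iiy, smul_mul_assoc, zero_add]
    have h2 : (P * Q) * P = P * Q * P := by noncomm_ring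
    rw [h2, hPQP, smul_zero]
  have expand4 : P * x * P * y * P
      = P * (E * x * E) * P * y * P + P * (E * x * Q) * P * y * P
        + P * (Q * x * E) * P * y * P + P * (Q * x * Q) * P * y * P := by
    have h0 : P * (E * x * E) * P * y * P + P * (E * x * Q) * P * y * P
        + P * (Q * x * E) * P * y * P + P * (Q * x * Q) * P * y * P
        = P * ((E + Q) * x * (E + Q)) * P * y * P := by noncomm_ring
    rw [h0, hEQ1, one_mul, mul_one]
  have T1 : P * (E * x * E) * P * y * P = 0 := by
    have s1 : P * (E * x * E) * P * y * P = P * E * x * ((E * P) * (y * P)) := by noncomm_ring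
    have s2 : (E * P) * (y * P) = (E * P * Q) * (y * P) := by rw [hEPQ]
    have s3 : P * E * x * ((E * P * Q) * (y * P)) = P * E * x * E * (P * Q * y * P) := by
      noncomm_ring
    rw [s1, s2, s3, ly, mul_zero]
  have T2 : P * (E * x * Q) * P * y * P = 0 := by
    rw [iiix]
    have s1 : P * (zx * (E * P)) * P * y * P = P * zx * ((E * P) * (P * y * P)) := by
      noncomm_ring
    have s2 : (E * P) * (P * y * P) = (E * P * Q) * (P * y * P) := by rw [hEPQ]
    have s3 : P * zx * ((E * P * Q) * (P * y * P)) = P * zx * E * ((P * Q * P) * (y * P)) := by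
      noncomm_ring
    rw [s1, s2, s3, hPQP, zero_mul, mul_zero]
  have T3 : P * (Q * x * E) * P * y * P = 0 := by
    have s1 : P * (Q * x * E) * P * y * P = (P * Q * x * E) * (P * y * P) := by noncomm_ring
    rw [s1, ix, zero_mul]
  have T4 : P * (Q * x * Q) * P * y * P = 0 := by
    have s1 : P * (Q * x * Q) * P * y * P = (P * Q * x * Q) * (P * y * P) := by noncomm_ring
    rw [s1, iix, smul_mul_assoc]
    have s2 : (P * Q) * (P * y * P) = (P * Q * P) * (y * P) := by noncomm_ring
    rw [s2, hPQP, zero_mul, smul_zero]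
  rw [expand4, T1, T2, T3, T4]
  simp


private lemma g1 {α : Type*} [Semiring α] (x y z w : α) : (x*y)*(z*w) = (x*(y*z))*w := by
  rw [mul_assoc x y (z*w), ← mul_assoc y z w, ← mul_assoc x (y*z) w]

private lemma g3 {α : Type*} [Semiring α] (c x b t : α) : ((c*x)*b)*t = c*((x*b)*t) := by
  rw [mul_assoc c x b, mul_assoc c (x*b) t]

private lemma g4 {α : Type*} [Semiring α] (c x b c' y b' : α) :
    ((c*x)*b)*((c'*y)*b') = (c*((x*b)*(c'*y)))*b' := by
  rw [mul_assoc c x b, ← mul_assoc (c*(x*b)) (c'*y) b', mul_assoc c (x*b) (c'*y)]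



private def UUs (A B C : R) : Submodule ℂ R :=
  Subalgebra.toSubmodule (Algebra.adjoin ℂ ({A, B * C} : Set R))

private def PPs (B C : R) : Submodule ℂ R := Submodule.span ℂ {B * C}

private def Iw (A B C : R) : ℕ → Submodule ℂ R
  | 0 => UUs A B C
  | k + 1 => Iw A B C k * PPs B C * UUs A B C

private def TTm (A B C : R) (a b c d : ℕ) (m : Matrix (Fin 2) (Fin 2) R) : Prop :=
  m 0 0 ∈ Iw A B C a ∧ m 0 1 ∈ Iw A B C b * Submodule.span ℂ {B} ∧
  m 1 0 ∈ Submodule.span ℂ {C} * Iw A B C c ∧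
  m 1 1 ∈ Submodule.span ℂ {C} * Iw A B C d * Submodule.span ℂ {B}


variable (A B C : R)


private lemma Iw_zero : Iw A B C 0 = UUs A B C := rfl
private lemma Iw_succ (k : ℕ) : Iw A B C (k + 1) = Iw A B C k * PPs B C * UUs A B C := rfl

private lemma UUs_mul : UUs A B C * UUs A B C ≤ UUs A B C :=
  Submodule.mul_le.2 fun m hm n hn => by
    rw [UUs, Subalgebra.mem_toSubmodule] at *
    exact mul_mem hm hn

private lemma one_le_UUs : (1 : Submodule ℂ R) ≤ UUs A B C :=
  Submodule.one_le.2 (by rw [UUs, Subalgebra.mem_toSubmodule]; exact one_mem _)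

private lemma PPs_le : PPs B C ≤ UUs A B C :=
  Submodule.span_le.2 (by
    intro x hx
    rw [Set.mem_singleton_iff] at hx
    subst hx
    rw [SetLike.mem_coe, UUs, Subalgebra.mem_toSubmodule]
    exact Algebra.subset_adjoin (Set.mem_insert_iff.2 (Or.inr rfl)))

private lemma Iw_mul_UU : ∀ k, Iw A B C k * UUs A B C ≤ Iw A B C k := by
  intro k
  induction k with
  | zero => exact UUs_mul A B C
  | succ k ih =>
      rw [Iw_succ, mul_assoc]
      exact (mul_le_mul_right (UUs_mul A B C) _)

private lemma Iw_le_UU_mul (k : ℕ) : Iw A B C k ≤ UUs A B C * Iw A B C k := by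
  conv_lhs => rw [← Submodule.one_mul (Iw A B C k)]
  exact (mul_le_mul_left (one_le_UUs A B C) _)

private lemma Iw_add : ∀ j k, Iw A B C j * Iw A B C k ≤ Iw A B C (j + k) := by
  intro j k
  induction k with
  | zero => exact Iw_mul_UU A B C j
  | succ k ih =>
      rw [Iw_succ, ← mul_assoc, ← mul_assoc]
      calc Iw A B C j * Iw A B C k * PPs B C * UUs A B C
          ≤ Iw A B C (j + k) * PPs B C * UUs A B C := by
            exact (mul_le_mul_left ((mul_le_mul_left ih _)) _)
        _ = Iw A B C (j + k + 1) := (Iw_succ A B C (j + k)).symm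

private lemma Iw_succ_le (k : ℕ) : Iw A B C (k + 1) ≤ Iw A B C k := by
  rw [Iw_succ]
  calc Iw A B C k * PPs B C * UUs A B C
      ≤ Iw A B C k * UUs A B C * UUs A B C :=
        (mul_le_mul_left ((mul_le_mul_right (PPs_le A B C) _)) _)
    _ = Iw A B C k * (UUs A B C * UUs A B C) := mul_assoc _ _ _
    _ ≤ Iw A B C k * UUs A B C := (mul_le_mul_right (UUs_mul A B C) _)
    _ ≤ Iw A B C k := Iw_mul_UU A B C k

private lemma Iw_anti : Antitone (Iw A B C) :=
  antitone_nat_of_succ_le (Iw_succ_le A B C)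

private lemma Iw_P_le (j k : ℕ) :
    Iw A B C j * PPs B C * Iw A B C k ≤ Iw A B C (j + 1 + k) := by
  calc Iw A B C j * PPs B C * Iw A B C k
      ≤ Iw A B C j * PPs B C * (UUs A B C * Iw A B C k) :=
        (mul_le_mul_right (Iw_le_UU_mul A B C k) _)
    _ = (Iw A B C j * PPs B C * UUs A B C) * Iw A B C k := by
        rw [mul_assoc, mul_assoc, mul_assoc]
    _ = Iw A B C (j + 1) * Iw A B C k := by rw [← Iw_succ]
    _ ≤ Iw A B C (j + 1 + k) := Iw_add A B C (j + 1) k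



private lemma BB_mul_CC :
    Submodule.span ℂ {B} * Submodule.span ℂ {C} = PPs B C := by
  rw [PPs, Submodule.span_mul_span, Set.singleton_mul_singleton]

private lemma Iw3_bot'
    (hkl : ∀ x ∈ Algebra.adjoin ℂ ({A, B * C} : Set R),
      ∀ y ∈ Algebra.adjoin ℂ ({A, B * C} : Set R),
      (B * C) * x * (B * C) * y * (B * C) = 0)
    (I1 I2 I3 : Submodule ℂ R)
    (h1 : I1 = UUs A B C * PPs B C * UUs A B C)
    (h2 : I2 = I1 * PPs B C * UUs A B C)
    (h3 : I3 = I2 * PPs B C * UUs A B C) : I3 = ⊥ := by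
  have memP : ∀ {p : R}, p ∈ PPs B C → ∃ c : ℂ, p = c • (B * C) := by
    intro p hp
    obtain ⟨c, hc⟩ := Submodule.mem_span_singleton.1 hp
    exact ⟨c, hc.symm⟩
  have memU : ∀ {u : R}, u ∈ UUs A B C → u ∈ Algebra.adjoin ℂ ({A, B * C} : Set R) := by
    intro u hu
    rwa [UUs, Subalgebra.mem_toSubmodule] at hu
  have claim2 : ∀ w ∈ I1, ∀ u ∈ UUs A B C, w * (B * C) * u * (B * C) = 0 := by
    intro w hw u hu
    rw [h1] at hw
    refine Submodule.mul_induction_on hw (fun m hm u1 hu1 => ?_) (fun x y hx hy => ?_)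
    · refine Submodule.mul_induction_on hm (fun u0 hu0 p hp => ?_) (fun x y hx hy => ?_)
      · obtain ⟨c, rfl⟩ := memP hp
        have hz := hkl u1 (memU hu1) u (memU hu)
        have hre : u0 * (c • (B * C)) * u1 * (B * C) * u * (B * C)
            = c • (u0 * ((B * C) * u1 * (B * C) * u * (B * C))) := by
          simp only [smul_mul_assoc, mul_smul_comm]
          congr 1
          noncomm_ring
        rw [hre, hz, mul_zero, smul_zero]
      · rw [add_mul, add_mul, add_mul, add_mul, hx, hy, add_zero]
    · rw [add_mul, add_mul, add_mul, hx, hy, add_zero]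
  have claim1 : ∀ w ∈ I2, w * (B * C) = 0 := by
    intro w hw
    rw [h2] at hw
    refine Submodule.mul_induction_on hw (fun m hm u2 hu2 => ?_) (fun x y hx hy => ?_)
    · refine Submodule.mul_induction_on hm (fun w1 hw1 p hp => ?_) (fun x y hx hy => ?_)
      · obtain ⟨c, rfl⟩ := memP hp
        have hre : w1 * (c • (B * C)) * u2 * (B * C)
            = c • (w1 * (B * C) * u2 * (B * C)) := by
          simp only [smul_mul_assoc, mul_smul_comm]
        rw [hre, claim2 w1 hw1 u2 hu2, smul_zero]
      · rw [add_mul, add_mul, hx, hy, add_zero]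
    · rw [add_mul, hx, hy, add_zero]
  have claim0 : ∀ w ∈ I3, w = 0 := by
    intro w hw
    rw [h3] at hw
    refine Submodule.mul_induction_on hw (fun m hm u3 hu3 => ?_) (fun x y hx hy => ?_)
    · refine Submodule.mul_induction_on hm (fun w2 hw2 p hp => ?_) (fun x y hx hy => ?_)
      · obtain ⟨c, rfl⟩ := memP hp
        have hre : w2 * (c • (B * C)) * u3 = c • (w2 * (B * C) * u3) := by
          simp only [smul_mul_assoc, mul_smul_comm]
        rw [hre, claim1 w2 hw2, zero_mul, smul_zero]
      · rw [add_mul, hx, hy, add_zero]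
    · rw [hx, hy, add_zero]
  exact eq_bot_iff.2 fun w hw => (Submodule.mem_bot ℂ).2 (claim0 w hw)




private lemma q1 (b c : ℕ) :
    (Iw A B C b * Submodule.span ℂ {B}) * (Submodule.span ℂ {C} * Iw A B C c)
      ≤ Iw A B C (b + 1 + c) := by
  refine (le_of_eq (g1 _ _ _ _)).trans ?_
  rw [BB_mul_CC]
  exact Iw_P_le A B C b c

private lemma TTle {a b c d a' b' c' d' : ℕ} {m : Matrix (Fin 2) (Fin 2) R}
    (h : TTm A B C a b c d m) (ha : a' ≤ a) (hb : b' ≤ b) (hc : c' ≤ c) (hd : d' ≤ d) :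
    TTm A B C a' b' c' d' m := by
  obtain ⟨h00, h01, h10, h11⟩ := h
  exact ⟨Iw_anti A B C ha h00,
    (mul_le_mul_left (Iw_anti A B C hb) _) h01,
    (mul_le_mul_right (Iw_anti A B C hc) _) h10,
    (mul_le_mul_left ((mul_le_mul_right (Iw_anti A B C hd) _)) _) h11⟩

section TTmulparts
variable {a b c d a' b' c' d' : ℕ} {m n : Matrix (Fin 2) (Fin 2) R}

private lemma TTmul00 (hm : TTm A B C a b c d m) (hn : TTm A B C a' b' c' d' n) :
    (m * n) 0 0 ∈ Iw A B C (min (a + a') (b + 1 + c')) := by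
  obtain ⟨h00, h01, h10, h11⟩ := hm
  obtain ⟨k00, k01, k10, k11⟩ := hn
  have e : (m * n) 0 0 = m 0 0 * n 0 0 + m 0 1 * n 1 0 := by
    rw [Matrix.mul_apply, Fin.sum_univ_two]
  rw [e]
  refine add_mem
    (Iw_anti A B C (min_le_left _ _) (Iw_add A B C a a' (Submodule.mul_mem_mul h00 k00)))
    (Iw_anti A B C (min_le_right _ _) (q1 A B C b c' (Submodule.mul_mem_mul h01 k10)))

private lemma TTmul01 (hm : TTm A B C a b c d m) (hn : TTm A B C a' b' c' d' n) :
    (m * n) 0 1 ∈ Iw A B C (min (a + b') (b + 1 + d')) * Submodule.span ℂ {B} := by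
  obtain ⟨h00, h01, h10, h11⟩ := hm
  obtain ⟨k00, k01, k10, k11⟩ := hn
  have e : (m * n) 0 1 = m 0 0 * n 0 1 + m 0 1 * n 1 1 := by
    rw [Matrix.mul_apply, Fin.sum_univ_two]
  rw [e]
  refine add_mem (?_ : _ ∈ _) ?_
  · have hle : Iw A B C a * (Iw A B C b' * Submodule.span ℂ {B})
        ≤ Iw A B C (min (a + b') (b + 1 + d')) * Submodule.span ℂ {B} :=
      (le_of_eq (mul_assoc _ _ _).symm).trans
        ((mul_le_mul_left
          ((Iw_add A B C a b').trans (Iw_anti A B C (min_le_left _ _))) _))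
    exact hle (Submodule.mul_mem_mul h00 k01)
  · have hle : (Iw A B C b * Submodule.span ℂ {B})
        * (Submodule.span ℂ {C} * Iw A B C d' * Submodule.span ℂ {B})
        ≤ Iw A B C (min (a + b') (b + 1 + d')) * Submodule.span ℂ {B} :=
      (le_of_eq (mul_assoc _ _ _).symm).trans
        ((mul_le_mul_left
          ((q1 A B C b d').trans (Iw_anti A B C (min_le_right _ _))) _))
    exact hle (Submodule.mul_mem_mul h01 k11)

private lemma TTmul10 (hm : TTm A B C a b c d m) (hn : TTm A B C a' b' c' d' n) :
    (m * n) 1 0 ∈ Submodule.span ℂ {C} * Iw A B C (min (c + a') (d + 1 + c')) := by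
  obtain ⟨h00, h01, h10, h11⟩ := hm
  obtain ⟨k00, k01, k10, k11⟩ := hn
  have e : (m * n) 1 0 = m 1 0 * n 0 0 + m 1 1 * n 1 0 := by
    rw [Matrix.mul_apply, Fin.sum_univ_two]
  rw [e]
  refine add_mem ?_ ?_
  · have hle : (Submodule.span ℂ {C} * Iw A B C c) * Iw A B C a'
        ≤ Submodule.span ℂ {C} * Iw A B C (min (c + a') (d + 1 + c')) :=
      (le_of_eq (mul_assoc _ _ _)).trans
        ((mul_le_mul_right
          ((Iw_add A B C c a').trans (Iw_anti A B C (min_le_left _ _))) _))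
    exact hle (Submodule.mul_mem_mul h10 k00)
  · have hle : (Submodule.span ℂ {C} * Iw A B C d * Submodule.span ℂ {B})
        * (Submodule.span ℂ {C} * Iw A B C c')
        ≤ Submodule.span ℂ {C} * Iw A B C (min (c + a') (d + 1 + c')) :=
      (le_of_eq (g3 _ _ _ _)).trans
        ((mul_le_mul_right
          ((q1 A B C d c').trans (Iw_anti A B C (min_le_right _ _))) _))
    exact hle (Submodule.mul_mem_mul h11 k10)

private lemma TTmul11 (hm : TTm A B C a b c d m) (hn : TTm A B C a' b' c' d' n) :
    (m * n) 1 1 ∈ Submodule.span ℂ {C} * Iw A B C (min (c + b') (d + 1 + d'))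
      * Submodule.span ℂ {B} := by
  obtain ⟨h00, h01, h10, h11⟩ := hm
  obtain ⟨k00, k01, k10, k11⟩ := hn
  have e : (m * n) 1 1 = m 1 0 * n 0 1 + m 1 1 * n 1 1 := by
    rw [Matrix.mul_apply, Fin.sum_univ_two]
  rw [e]
  refine add_mem ?_ ?_
  · have hle : (Submodule.span ℂ {C} * Iw A B C c) * (Iw A B C b' * Submodule.span ℂ {B})
        ≤ Submodule.span ℂ {C} * Iw A B C (min (c + b') (d + 1 + d'))
          * Submodule.span ℂ {B} :=
      (le_of_eq (g1 _ _ _ _)).trans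
        ((mul_le_mul_left ((mul_le_mul_right
          ((Iw_add A B C c b').trans (Iw_anti A B C (min_le_left _ _))) _)) _))
    exact hle (Submodule.mul_mem_mul h10 k01)
  · have hle : (Submodule.span ℂ {C} * Iw A B C d * Submodule.span ℂ {B})
        * (Submodule.span ℂ {C} * Iw A B C d' * Submodule.span ℂ {B})
        ≤ Submodule.span ℂ {C} * Iw A B C (min (c + b') (d + 1 + d'))
          * Submodule.span ℂ {B} :=
      (le_of_eq (g4 _ _ _ _ _ _)).trans
        ((mul_le_mul_left ((mul_le_mul_right
          ((q1 A B C d d').trans (Iw_anti A B C (min_le_right _ _))) _)) _))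
    exact hle (Submodule.mul_mem_mul h11 k11)

private lemma TTmul (hm : TTm A B C a b c d m) (hn : TTm A B C a' b' c' d' n) :
    TTm A B C (min (a + a') (b + 1 + c')) (min (a + b') (b + 1 + d'))
      (min (c + a') (d + 1 + c')) (min (c + b') (d + 1 + d')) (m * n) :=
  ⟨TTmul00 A B C hm hn, TTmul01 A B C hm hn, TTmul10 A B C hm hn, TTmul11 A B C hm hn⟩

end TTmulparts



private lemma key_nilpotent (AD : R)
    (hcomm : A * AD = AD * A) (had : AD = AD * A * AD) (hmnil : IsNilpotent (A - A * AD))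
    (h1 : AD * (B * C) * AD = 0)
    (h2 : (B * C) * (1 - A * AD) * (B * C) = 0)
    (h3 : (B * C) * (1 - A * AD) * A = 0) :
    IsNilpotent ((!![A, B; C, 0] : Matrix (Fin 2) (Fin 2) R)
      - (!![A, B; C, 0] : Matrix (Fin 2) (Fin 2) R) ^ 3) := by
  -- basic operator facts
  have hEE : (A * AD) * (A * AD) = A * AD := by
    calc A * AD * (A * AD) = A * (AD * (A * AD)) := by rw [mul_assoc]
      _ = A * (AD * A * AD) := by rw [← mul_assoc AD A AD]
      _ = A * AD := by rw [← had]
  have hAE : A * (A * AD) = (A * AD) * A := by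
    rw [hcomm, ← mul_assoc, ← hcomm]
  have hEQ : (A * AD) * (1 - A * AD) = 0 := by rw [mul_sub, mul_one, hEE, sub_self]
  have hQE : (1 - A * AD) * (A * AD) = 0 := by rw [sub_mul, one_mul, hEE, sub_self]
  have hQQ : (1 - A * AD) * (1 - A * AD) = 1 - A * AD := by
    rw [mul_sub, mul_one, hQE, sub_zero]
  have hAQ : A * (1 - A * AD) = (1 - A * AD) * A := by
    rw [mul_sub, sub_mul, mul_one, one_mul, hAE]
  have hEQ1 : (A * AD) + (1 - A * AD) = 1 := by abel
  have hEPE : (A * AD) * (B * C) * (A * AD) = 0 := by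
    nth_rewrite 2 [hcomm]
    have hre : A * AD * (B * C) * (AD * A) = A * (AD * (B * C) * AD) * A := by noncomm_ring
    rw [hre, h1, mul_zero, zero_mul]
  have hkl := kl_lemma A (B * C) (A * AD) (1 - A * AD) hEQ1 hEE hEQ hQE hQQ hAQ hEPE h2 h3
  obtain ⟨s, hs⟩ := nilpA3 A (A * AD) hAE hEE hmnil
  -- adjoin memberships
  have hAadj : A ∈ Algebra.adjoin ℂ ({A, B * C} : Set R) :=
    Algebra.subset_adjoin (Set.mem_insert _ _)
  have hPadj : B * C ∈ Algebra.adjoin ℂ ({A, B * C} : Set R) :=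
    Algebra.subset_adjoin (Set.mem_insert_iff.2 (Or.inr rfl))
  have memU0 : ∀ {x : R}, x ∈ Algebra.adjoin ℂ ({A, B * C} : Set R) → x ∈ Iw A B C 0 := by
    intro x hx
    show x ∈ UUs A B C
    rw [UUs, Subalgebra.mem_toSubmodule]
    exact hx
  have hAU : A ∈ Iw A B C 0 := memU0 hAadj
  have h1U : (1 : R) ∈ Iw A B C 0 := memU0 (one_mem _)
  have hPP : B * C ∈ PPs B C := Submodule.mem_span_singleton_self _
  have hBB : B ∈ Submodule.span ℂ ({B} : Set R) := Submodule.mem_span_singleton_self _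
  have hCC : C ∈ Submodule.span ℂ ({C} : Set R) := Submodule.mem_span_singleton_self _
  -- memberships for G entries
  have hPA1 : (B * C) * A ∈ Iw A B C 1 := by
    have h := Submodule.mul_mem_mul (Submodule.mul_mem_mul h1U hPP) hAU
    rwa [one_mul] at h
  have hAP1 : A * (B * C) ∈ Iw A B C 1 := by
    have h := Submodule.mul_mem_mul (Submodule.mul_mem_mul hAU hPP) h1U
    rwa [mul_one] at h
  have hgU : (1 - A * A - B * C) ∈ Iw A B C 0 :=
    memU0 (sub_mem (sub_mem (one_mem _) (mul_mem hAadj hAadj)) hPadj)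
  -- the J predicate basics
  have hJ0 : TTm A B C 1 0 0 0 (0 : Matrix (Fin 2) (Fin 2) R) := by
    refine ⟨?_, ?_, ?_, ?_⟩ <;> simp
  have hJadd : ∀ m n, TTm A B C 1 0 0 0 m → TTm A B C 1 0 0 0 n →
      TTm A B C 1 0 0 0 (m + n) := by
    intro m n hm hn
    exact ⟨by rw [Matrix.add_apply]; exact add_mem hm.1 hn.1,
      by rw [Matrix.add_apply]; exact add_mem hm.2.1 hn.2.1,
      by rw [Matrix.add_apply]; exact add_mem hm.2.2.1 hn.2.2.1,
      by rw [Matrix.add_apply]; exact add_mem hm.2.2.2 hn.2.2.2⟩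
  have hJsub : ∀ m n, TTm A B C 1 0 0 0 m → TTm A B C 1 0 0 0 n →
      TTm A B C 1 0 0 0 (m - n) := by
    intro m n hm hn
    exact ⟨by rw [Matrix.sub_apply]; exact sub_mem hm.1 hn.1,
      by rw [Matrix.sub_apply]; exact sub_mem hm.2.1 hn.2.1,
      by rw [Matrix.sub_apply]; exact sub_mem hm.2.2.1 hn.2.2.1,
      by rw [Matrix.sub_apply]; exact sub_mem hm.2.2.2 hn.2.2.2⟩
  -- membership of the basic matrices
  have hMtT : TTm A B C 0 0 0 0 (!![A, B; C, 0] : Matrix (Fin 2) (Fin 2) R) := by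
    refine ⟨?_, ?_, ?_, ?_⟩
    · simpa using hAU
    · have h := Submodule.mul_mem_mul h1U hBB
      rw [one_mul] at h
      simpa using h
    · have h := Submodule.mul_mem_mul hCC h1U
      rw [mul_one] at h
      simpa using h
    · simp
  have hDT : TTm A B C 0 0 0 0 (!![A - A ^ 3, 0; 0, 0] : Matrix (Fin 2) (Fin 2) R) := by
    refine ⟨?_, ?_, ?_, ?_⟩
    · simpa using memU0 (sub_mem hAadj (pow_mem hAadj 3))
    · simp
    · simp
    · simp
  -- G = Mt - Mt^3 - Δ explicitly
  have hM3 : (!![A, B; C, 0] : Matrix (Fin 2) (Fin 2) R) ^ 3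
      = !![A, B; C, 0] * (!![A, B; C, 0] * !![A, B; C, 0]) := by
    rw [pow_succ, pow_succ, pow_one, mul_assoc]
  have hGval : (!![A, B; C, 0] : Matrix (Fin 2) (Fin 2) R)
        - (!![A, B; C, 0] : Matrix (Fin 2) (Fin 2) R) ^ 3 - !![A - A ^ 3, 0; 0, 0]
      = !![-((B * C) * A) - A * (B * C), (1 - A * A - B * C) * B;
           C * (1 - A * A - B * C), -(C * A * B)] := by
    rw [hM3, Matrix.mul_fin_two, Matrix.mul_fin_two]
    ext i j
    fin_cases i <;> fin_cases j <;> simp <;> noncomm_ring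
  have hGT : TTm A B C 1 0 0 0
      ((!![A, B; C, 0] : Matrix (Fin 2) (Fin 2) R)
        - (!![A, B; C, 0] : Matrix (Fin 2) (Fin 2) R) ^ 3 - !![A - A ^ 3, 0; 0, 0]) := by
    rw [hGval]
    refine ⟨?_, ?_, ?_, ?_⟩
    · simpa using sub_mem (neg_mem hPA1) hAP1
    · simpa using Submodule.mul_mem_mul hgU hBB
    · simpa using Submodule.mul_mem_mul hCC hgU
    · have h := Submodule.mul_mem_mul (Submodule.mul_mem_mul hCC hAU) hBB
      simpa using neg_mem h
  -- closure under multiplication by Mt and Δ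
  have hJMtl : ∀ m, TTm A B C 1 0 0 0 m →
      TTm A B C 1 0 0 0 ((!![A, B; C, 0] : Matrix (Fin 2) (Fin 2) R) * m) := by
    intro m hm
    exact TTle A B C (TTmul A B C hMtT hm) (by decide) (by decide) (by decide) (by decide)
  have hJMtr : ∀ m, TTm A B C 1 0 0 0 m →
      TTm A B C 1 0 0 0 (m * (!![A, B; C, 0] : Matrix (Fin 2) (Fin 2) R)) := by
    intro m hm
    exact TTle A B C (TTmul A B C hm hMtT) (by decide) (by decide) (by decide) (by decide)
  have hJDr : ∀ m, TTm A B C 1 0 0 0 m →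
      TTm A B C 1 0 0 0 (m * (!![A - A ^ 3, 0; 0, 0] : Matrix (Fin 2) (Fin 2) R)) := by
    intro m hm
    exact TTle A B C (TTmul A B C hm hDT) (by decide) (by decide) (by decide) (by decide)
  have hxl : ∀ m, TTm A B C 1 0 0 0 m →
      TTm A B C 1 0 0 0
        (((!![A, B; C, 0] : Matrix (Fin 2) (Fin 2) R) - (!![A, B; C, 0]) ^ 3) * m) := by
    intro m hm
    have he : ((!![A, B; C, 0] : Matrix (Fin 2) (Fin 2) R) - (!![A, B; C, 0]) ^ 3) * m
        = !![A, B; C, 0] * m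
          - !![A, B; C, 0] * (!![A, B; C, 0] * (!![A, B; C, 0] * m)) := by
      rw [hM3]; noncomm_ring
    rw [he]
    exact hJsub _ _ (hJMtl m hm) (hJMtl _ (hJMtl _ (hJMtl m hm)))
  have hxkG : ∀ k, TTm A B C 1 0 0 0
      (((!![A, B; C, 0] : Matrix (Fin 2) (Fin 2) R) - (!![A, B; C, 0]) ^ 3) ^ k
        * ((!![A, B; C, 0] : Matrix (Fin 2) (Fin 2) R)
            - (!![A, B; C, 0]) ^ 3 - !![A - A ^ 3, 0; 0, 0])) := by
    intro k
    induction k with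
    | zero => rw [pow_zero, one_mul]; exact hGT
    | succ k ih =>
        rw [pow_succ', mul_assoc]
        exact hxl _ ih
  have hpow : ∀ k, TTm A B C 1 0 0 0
      (((!![A, B; C, 0] : Matrix (Fin 2) (Fin 2) R) - (!![A, B; C, 0]) ^ 3) ^ k
        - (!![A - A ^ 3, 0; 0, 0] : Matrix (Fin 2) (Fin 2) R) ^ k) := by
    intro k
    induction k with
    | zero => rw [pow_zero, pow_zero, sub_self]; exact hJ0
    | succ k ih =>
        have he : ((!![A, B; C, 0] : Matrix (Fin 2) (Fin 2) R) - (!![A, B; C, 0]) ^ 3) ^ (k + 1)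
            - (!![A - A ^ 3, 0; 0, 0] : Matrix (Fin 2) (Fin 2) R) ^ (k + 1)
            = ((!![A, B; C, 0] : Matrix (Fin 2) (Fin 2) R) - (!![A, B; C, 0]) ^ 3) ^ k
                * ((!![A, B; C, 0] : Matrix (Fin 2) (Fin 2) R)
                    - (!![A, B; C, 0]) ^ 3 - !![A - A ^ 3, 0; 0, 0])
              + (((!![A, B; C, 0] : Matrix (Fin 2) (Fin 2) R) - (!![A, B; C, 0]) ^ 3) ^ k
                  - (!![A - A ^ 3, 0; 0, 0] : Matrix (Fin 2) (Fin 2) R) ^ k)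
                * !![A - A ^ 3, 0; 0, 0] := by
          rw [pow_succ, pow_succ]; noncomm_ring
        rw [he]
        exact hJadd _ _ (hxkG k) (hJDr _ ih)
  -- Δ powers
  have hDpow : ∀ k, (!![A - A ^ 3, 0; 0, 0] : Matrix (Fin 2) (Fin 2) R) ^ (k + 1)
      = !![(A - A ^ 3) ^ (k + 1), 0; 0, 0] := by
    intro k
    induction k with
    | zero => rw [pow_one, pow_one]
    | succ k ih =>
        rw [pow_succ, ih, Matrix.mul_fin_two, ← pow_succ]
        simp
  have hD0 : (!![A - A ^ 3, 0; 0, 0] : Matrix (Fin 2) (Fin 2) R) ^ (s + 1) = 0 := by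
    rw [hDpow s, pow_succ, hs, zero_mul]
    ext i j
    fin_cases i <;> fin_cases j <;> simp
  have hxs : TTm A B C 1 0 0 0
      (((!![A, B; C, 0] : Matrix (Fin 2) (Fin 2) R) - (!![A, B; C, 0]) ^ 3) ^ (s + 1)) := by
    have h := hpow (s + 1)
    rwa [hD0, sub_zero] at h
  -- the seventh power of j
  set jm := ((!![A, B; C, 0] : Matrix (Fin 2) (Fin 2) R) - (!![A, B; C, 0]) ^ 3) ^ (s + 1)
    with hjm
  have t2 : TTm A B C 1 1 1 0 (jm * jm) :=
    TTle A B C (TTmul A B C hxs hxs) (by decide) (by decide) (by decide) (by decide)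
  have t3 : TTm A B C 2 1 1 1 (jm * jm * jm) :=
    TTle A B C (TTmul A B C t2 hxs) (by decide) (by decide) (by decide) (by decide)
  have t4 : TTm A B C 2 2 2 1 (jm * jm * jm * jm) :=
    TTle A B C (TTmul A B C t3 hxs) (by decide) (by decide) (by decide) (by decide)
  have t5 : TTm A B C 3 2 2 2 (jm * jm * jm * jm * jm) :=
    TTle A B C (TTmul A B C t4 hxs) (by decide) (by decide) (by decide) (by decide)
  have t6 : TTm A B C 3 3 3 2 (jm * jm * jm * jm * jm * jm) :=
    TTle A B C (TTmul A B C t5 hxs) (by decide) (by decide) (by decide) (by decide)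
  have t7 : TTm A B C 3 3 3 3 (jm * jm * jm * jm * jm * jm * jm) :=
    TTle A B C (TTmul A B C t6 hxs) (by decide) (by decide) (by decide) (by decide)
  have hbot : Iw A B C 3 = ⊥ :=
    Iw3_bot' A B C hkl (Iw A B C 1) (Iw A B C 2) (Iw A B C 3)
      (by rw [show Iw A B C 1 = Iw A B C 0 * PPs B C * UUs A B C from rfl]; rfl)
      rfl rfl
  have hj7 : jm * jm * jm * jm * jm * jm * jm = 0 := by
    obtain ⟨u00, u01, u10, u11⟩ := t7
    rw [hbot] at u00 u01 u10 u11
    rw [Submodule.bot_mul] at u01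
    rw [Submodule.mul_bot] at u10
    rw [Submodule.mul_bot, Submodule.bot_mul] at u11
    rw [Submodule.mem_bot] at u00 u01 u10 u11
    rw [Matrix.eta_fin_two (jm * jm * jm * jm * jm * jm * jm), u00, u01, u10, u11]
    ext i j
    fin_cases i <;> fin_cases j <;> rfl
  refine ⟨(s + 1) * 7, ?_⟩
  rw [pow_mul, ← hjm]
  have e7 : jm ^ 7 = jm * jm * jm * jm * jm * jm * jm := by
    rw [show jm ^ 7 = jm ^ 6 * jm from pow_succ jm 6,
      show jm ^ 6 = jm ^ 5 * jm from pow_succ jm 5,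
      show jm ^ 5 = jm ^ 4 * jm from pow_succ jm 4,
      show jm ^ 4 = jm ^ 3 * jm from pow_succ jm 3,
      show jm ^ 3 = jm ^ 2 * jm from pow_succ jm 2,
      show jm ^ 2 = jm ^ 1 * jm from pow_succ jm 1, pow_one]
  rw [e7]
  exact hj7



end Hirano

variable {X : Type*} [NormedAddCommGroup X] [NormedSpace ℂ X] [CompleteSpace X]

theorem hirano_anti_triangular_BC (A B C AD : X →L[ℂ] X)
    (hAD : A * AD = AD * A ∧ AD = AD * A * AD ∧ IsNilpotent (A - A * AD))
    (hBC : HasStronglyDrazinInverse (B * C))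
    (h1 : AD * (B * C) * AD = 0)
    (h2 : (B * C) * (1 - A * AD) * (B * C) = 0)
    (h3 : (B * C) * (1 - A * AD) * A = 0) :
    HasHiranoInverse (!![A, B; C, 0] : Matrix (Fin 2) (Fin 2) (X →L[ℂ] X)) := by
  obtain ⟨hc, hd, hn⟩ := hAD
  exact hasHirano_of_isNilpotent (key_nilpotent A B C AD hc hd hn h1 h2 h3)
end

section
/- Let X be a complex Banach space and L(X) the Banach algebra of bounded linear operators on X. Suppose A, D and BC have strongly Drazin inverses. If ABC = 0, BC A^π = 0, BDC = 0 and BD² = 0, where A^π = I − A·A^D and A^D is the Drazin inverse of A, then the operator matrix [[A, B], [C, D]] has a Hirano inverse in M₂(L(X)). -/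
section Lemmas
variable {R : Type*} [Ring R]

/-- If `u * v = 0`, then `(u+v)^n` is a sum of terms `v^(n-i) * u^i`. -/
lemma pow_add_eq_sum_of_mul_eq_zero {u v : R} (h : u * v = 0) (n : ℕ) :
    (u + v) ^ n = ∑ i ∈ Finset.range (n + 1), v ^ (n - i) * u ^ i := by
  induction n with
  | zero => simp
  | succ n ih =>
    have huv : ∀ k, u * v ^ (k + 1) = 0 := by
      intro k; rw [pow_succ', ← mul_assoc, h, zero_mul]
    rw [pow_succ', ih, Finset.mul_sum]
    rw [Finset.sum_range_succ]  -- split i = n term on LHS sum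
    have e1 : ∀ i ∈ Finset.range n, (u + v) * (v ^ (n - i) * u ^ i) = v ^ (n + 1 - i) * u ^ i := by
      intro i hi
      rw [Finset.mem_range] at hi
      have h2 : n - i = (n - 1 - i) + 1 := by omega
      have h3 : n + 1 - i = (n - i) + 1 := by omega
      rw [add_mul, h2, ← mul_assoc, huv, zero_mul, zero_add, h3, ← h2, pow_succ',
        mul_assoc]
    rw [Finset.sum_congr rfl e1]
    rw [Nat.sub_self, pow_zero, one_mul, add_mul, ← pow_succ']
    rw [Finset.sum_range_succ (fun i => v ^ (n + 1 - i) * u ^ i)]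
    rw [Finset.sum_range_succ (fun i => v ^ (n + 1 - i) * u ^ i)]
    have : n + 1 - n = 1 := by omega
    rw [Nat.sub_self, pow_zero, one_mul, this, pow_one]
    abel

lemma isNilpotent_add_of_mul_eq_zero_s6 {u v : R} (h : u * v = 0)
    (hu : IsNilpotent u) (hv : IsNilpotent v) : IsNilpotent (u + v) := by
  obtain ⟨p, hp⟩ := hu
  obtain ⟨q, hq⟩ := hv
  refine ⟨p + q, ?_⟩
  rw [pow_add_eq_sum_of_mul_eq_zero h]
  apply Finset.sum_eq_zero
  intro i hi
  rcases le_or_gt p i with hle | hlt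
  · rw [pow_eq_zero_of_le hle hp, mul_zero]
  · have : q ≤ p + q - i := by omega
    rw [pow_eq_zero_of_le this hq, zero_mul]

end Lemmas

section SD
variable {R : Type*} [Ring R]

lemma idem_pow_s6 {x : R} (h : x * x = x) : ∀ k, x ^ (k + 1) = x := by
  intro k
  induction k with
  | zero => rw [pow_one]
  | succ k ih => rw [pow_succ, ih, h]

lemma isNilpotent_sub_sq_of_sd {d z : R} (h1 : d * z = z * d) (h2 : z = z * d * z)
    (h3 : IsNilpotent (d - d * z)) : IsNilpotent (d - d * d) := by
  have hee : (d * z) * (d * z) = d * z := by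
    calc (d * z) * (d * z) = d * (z * d * z) := by noncomm_ring
    _ = d * z := by rw [← h2]
  have hde : d * (d * z) = (d * z) * d := by
    calc d * (d * z) = d * (z * d) := by rw [← h1]
    _ = (d * z) * d := by rw [mul_assoc]
  have factor : d - d * d = (d - d * z) * (1 - d - d * z) := by
    have expand : (d - d * z) * (1 - d - d * z) =
        d - d * d - d * (d * z) - d * z + (d * z) * d + (d * z) * (d * z) := by
      noncomm_ring
    rw [expand, ← hde, hee]
    abel
  rw [factor]
  have cde : Commute d (d * z) := hde
  have hcomm : Commute (d - d * z) (1 - d - d * z) := by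
    have cd : Commute (d - d * z) d := (Commute.refl d).sub_left cde.symm
    have ce : Commute (d - d * z) (d * z) := cde.sub_left (Commute.refl (d * z))
    exact ((Commute.one_right _).sub_right cd).sub_right ce
  exact hcomm.isNilpotent_mul_right h3

lemma exists_strong_drazin (b : R) (h : IsNilpotent (b - b * b)) :
    ∃ z : R, b * z = z * b ∧ z = z * b * z ∧ IsNilpotent (b - b * z) ∧
      ∀ x : R, Commute b x → Commute z x := by
  obtain ⟨n, hn, hn1⟩ : ∃ n, (b - b * b) ^ n = 0 ∧ 1 ≤ n := by
    obtain ⟨m, hm⟩ := h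
    exact ⟨m + 1, by rw [pow_succ, hm, zero_mul], by omega⟩
  set s : R := ∑ i ∈ Finset.range n, (1 - b) ^ i with hs_def
  have hc1b : Commute b (1 - b) := (Commute.one_right b).sub_right (Commute.refl b)
  have hcbs : Commute b s :=
    Commute.sum_right _ _ _ fun i _ => hc1b.pow_right i
  have hbs : b * s = 1 - (1 - b) ^ n := by
    have h2 : s * (1 - b - 1) = (1 - b) ^ n - 1 := geom_sum_mul (1 - b) n
    have h3 : 1 - b - 1 = -b := by abel
    rw [h3, mul_neg] at h2
    have h4 : s * b = 1 - (1 - b) ^ n := by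
      have := congrArg Neg.neg h2
      simpa [neg_sub] using this
    rw [hcbs.eq, h4]
  have hkey : b ^ (n + 1) * s = b ^ n := by
    rw [pow_succ, mul_assoc, hbs, mul_sub, mul_one, ← hc1b.mul_pow,
      show b * (1 - b) = b - b * b by noncomm_ring, hn, sub_zero]
  have hkeyk : ∀ k, b ^ (n + k) * s ^ k = b ^ n := by
    intro k
    induction k with
    | zero => simp
    | succ k ih =>
      have csb : s * b ^ k = b ^ k * s := (hcbs.symm.pow_right k).eq
      have e1 : b ^ (n + (k + 1)) = b ^ (n + 1) * b ^ k := by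
        rw [← pow_add]; congr 1; omega
      calc b ^ (n + (k + 1)) * s ^ (k + 1)
          = b ^ (n + 1) * b ^ k * (s * s ^ k) := by rw [e1, pow_succ' s k]
      _ = b ^ (n + 1) * (b ^ k * s) * s ^ k := by
            rw [mul_assoc, mul_assoc, mul_assoc, ← mul_assoc (b ^ k) s (s ^ k)]
      _ = b ^ (n + 1) * (s * b ^ k) * s ^ k := by rw [csb]
      _ = b ^ (n + 1) * s * (b ^ k * s ^ k) := by
            rw [mul_assoc, mul_assoc, mul_assoc]
      _ = b ^ (n + k) * s ^ k := by rw [hkey, ← mul_assoc, ← pow_add]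
      _ = b ^ n := ih
  have Kn : b ^ (n + n) * s ^ n = b ^ n := hkeyk n
  -- abbreviations
  have hbz : b * (b ^ n * s ^ (n + 1)) = b ^ n * s ^ n := by
    rw [← mul_assoc, ← pow_succ', pow_succ' s n, ← mul_assoc,
      show b ^ (n + 1) * s * s ^ n = b ^ (n + 1) * s * s ^ n from rfl, hkey]
  have hzb : (b ^ n * s ^ (n + 1)) * b = b ^ n * s ^ n := by
    have c : s ^ (n + 1) * b = b * s ^ (n + 1) := (hcbs.symm.pow_left (n + 1)).eq
    rw [mul_assoc, c, ← mul_assoc, ← pow_succ, pow_succ' s n, ← mul_assoc, hkey]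
  have hez : (b ^ n * s ^ n) * (b ^ n * s ^ (n + 1)) = b ^ n * s ^ (n + 1) := by
    have c : s ^ n * b ^ n = b ^ n * s ^ n := (hcbs.symm.pow_pow n n).eq
    calc (b ^ n * s ^ n) * (b ^ n * s ^ (n + 1))
        = b ^ n * (s ^ n * b ^ n) * s ^ (n + 1) := by
          rw [mul_assoc, mul_assoc, mul_assoc]
    _ = b ^ n * (b ^ n * s ^ n) * s ^ (n + 1) := by rw [c]
    _ = (b ^ (n + n) * s ^ n) * s ^ (n + 1) := by
          rw [← mul_assoc (b ^ n) (b ^ n) (s ^ n), ← pow_add b n n]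
    _ = b ^ n * s ^ (n + 1) := by rw [Kn]
  have hee : (b ^ n * s ^ n) * (b ^ n * s ^ n) = b ^ n * s ^ n := by
    have c : s ^ n * b ^ n = b ^ n * s ^ n := (hcbs.symm.pow_pow n n).eq
    calc (b ^ n * s ^ n) * (b ^ n * s ^ n)
        = b ^ n * (s ^ n * b ^ n) * s ^ n := by rw [mul_assoc, mul_assoc, mul_assoc]
    _ = b ^ n * (b ^ n * s ^ n) * s ^ n := by rw [c]
    _ = (b ^ (n + n) * s ^ n) * s ^ n := by
          rw [← mul_assoc (b ^ n) (b ^ n) (s ^ n), ← pow_add b n n]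
    _ = b ^ n * s ^ n := by rw [Kn]
  refine ⟨b ^ n * s ^ (n + 1), ?_, ?_, ?_, ?_⟩
  · exact (((Commute.refl b).pow_right n).mul_right (hcbs.pow_right (n + 1))).eq
  · rw [hzb, hez]
  · -- IsNilpotent (b - b * z)
    rw [hbz]
    set e : R := b ^ n * s ^ n with he_def
    have hbe : Commute b e := ((Commute.refl b).pow_right n).mul_right (hcbs.pow_right n)
    have epow : e ^ n = e := by
      rw [show n = (n - 1) + 1 by omega, idem_pow_s6 hee]
    have h1e : (1 - e) * (1 - e) = 1 - e := by
      have : (1 - e) * (1 - e) = 1 - e - (e - e * e) := by noncomm_ring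
      rw [this, hee, sub_self, sub_zero]
    have h1epow : (1 - e) ^ n = 1 - e := by
      rw [show n = (n - 1) + 1 by omega, idem_pow_s6 h1e]
    have c1 : ((b - e) * e) ^ n = 0 := by
      have step1 : (b - e) * e = (b - 1) * e := by
        rw [sub_mul, sub_mul, hee, one_mul]
      have cb1e : Commute (b - 1) e := hbe.sub_left (Commute.one_left e)
      have cb1b : Commute (b - 1) b := (Commute.refl b).sub_left (Commute.one_left b)
      rw [step1, cb1e.mul_pow, epow, he_def, ← mul_assoc, ← cb1b.mul_pow,
        show (b - 1) * b = -(b - b * b) by noncomm_ring, neg_pow, hn, mul_zero, zero_mul]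
    have c2 : ((b - e) * (1 - e)) ^ n = 0 := by
      have step1 : (b - e) * (1 - e) = b * (1 - e) := by
        have : (b - e) * (1 - e) = b * (1 - e) - (e - e * e) := by noncomm_ring
        rw [this, hee, sub_self, sub_zero]
      have cb1e : Commute b (1 - e) := (Commute.one_right b).sub_right hbe
      rw [step1, cb1e.mul_pow, h1epow, mul_sub, mul_one, he_def, ← mul_assoc, ← pow_add,
        Kn, sub_self]
    have ce : Commute (b - e) e := hbe.sub_left (Commute.refl e)
    have c1e : Commute (b - e) (1 - e) := (Commute.one_right _).sub_right ce
    refine ⟨n, ?_⟩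
    calc (b - e) ^ n = (b - e) ^ n * e + (b - e) ^ n * (1 - e) := by
          rw [← mul_add, show e + (1 - e) = 1 by abel, mul_one]
    _ = ((b - e) * e) ^ n + ((b - e) * (1 - e)) ^ n := by
          rw [ce.mul_pow, c1e.mul_pow, epow, h1epow]
    _ = 0 := by rw [c1, c2, add_zero]
  · intro x hx
    have h1bx : Commute (1 - b) x := (Commute.one_left x).sub_left hx
    have hsx : Commute s x := Commute.sum_left _ _ _ fun i _ => h1bx.pow_left i
    exact (hx.pow_left n).mul_left (hsx.pow_left (n + 1))

end SD

section Mat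
variable {R : Type*} [Ring R]

lemma zero_fin_two : (!![(0 : R), 0; 0, 0] : Matrix (Fin 2) (Fin 2) R) = 0 := by
  ext i j
  fin_cases i <;> fin_cases j <;> rfl

lemma add_fin_two (a b c d e f g h : R) :
    !![a, b; c, d] + !![e, f; g, h] = !![a + e, b + f; c + g, d + h] := by
  ext i j
  fin_cases i <;> fin_cases j <;> rfl

lemma sub_fin_two (a b c d e f g h : R) :
    !![a, b; c, d] - !![e, f; g, h] = !![a - e, b - f; c - g, d - h] := by
  ext i j
  fin_cases i <;> fin_cases j <;> rfl

lemma triu_pow (P Q : R) : ∀ k : ℕ,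
    (!![P, Q; 0, 0] : Matrix (Fin 2) (Fin 2) R) ^ (k + 1) = !![P ^ (k + 1), P ^ k * Q; 0, 0] := by
  intro k
  induction k with
  | zero => simp [pow_one]
  | succ k ih =>
    rw [pow_succ, ih, Matrix.mul_fin_two]
    congr 1 <;> simp [pow_succ, mul_assoc]

lemma triu_nilpotent (P Q : R) (h : IsNilpotent P) :
    IsNilpotent (!![P, Q; 0, 0] : Matrix (Fin 2) (Fin 2) R) := by
  obtain ⟨k, hk⟩ := h
  refine ⟨k + 1, ?_⟩
  rw [triu_pow, pow_succ, hk]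
  simp [zero_fin_two]

lemma tril_pow (P Q : R) : ∀ k : ℕ,
    (!![0, 0; Q, P] : Matrix (Fin 2) (Fin 2) R) ^ (k + 1) = !![0, 0; P ^ k * Q, P ^ (k + 1)] := by
  intro k
  induction k with
  | zero => simp [pow_one]
  | succ k ih =>
    rw [pow_succ, ih, Matrix.mul_fin_two]
    congr 1 <;> simp [pow_succ, mul_assoc]

lemma tril_nilpotent (P Q : R) (h : IsNilpotent P) :
    IsNilpotent (!![0, 0; Q, P] : Matrix (Fin 2) (Fin 2) R) := by
  obtain ⟨k, hk⟩ := h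
  refine ⟨k + 1, ?_⟩
  rw [tril_pow, pow_succ, hk]
  simp [zero_fin_two]

end Mat

variable {X : Type*} [NormedAddCommGroup X] [NormedSpace ℂ X] [CompleteSpace X]

theorem hirano_full_matrix (A B C D AD : X →L[ℂ] X)
    (hAD : A * AD = AD * A ∧ AD = AD * A * AD ∧ IsNilpotent (A - A * AD))
    (hD : HasStronglyDrazinInverse D)
    (hBC : HasStronglyDrazinInverse (B * C))
    (h1 : A * (B * C) = 0)
    (h2 : (B * C) * (1 - A * AD) = 0)
    (h3 : B * D * C = 0)
    (h4 : B * D ^ 2 = 0) :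
    HasHiranoInverse (!![A, B; C, D] : Matrix (Fin 2) (Fin 2) (X →L[ℂ] X)) := by
  obtain ⟨hAD1, hAD2, hAD3⟩ := hAD
  have nA : IsNilpotent (A - A * A) := isNilpotent_sub_sq_of_sd hAD1 hAD2 hAD3
  obtain ⟨DZ, hd1, hd2, hd3⟩ := hD
  have nD : IsNilpotent (D - D * D) := isNilpotent_sub_sq_of_sd hd1 hd2 hd3
  -- basic vanishing facts
  have hBCe : B * C = B * C * (A * AD) := by
    have e : B * C * (1 - A * AD) = B * C - B * C * (A * AD) := by noncomm_ring
    rw [e] at h2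
    exact (sub_eq_zero.mp h2)
  have heBC : (A * AD) * (B * C) = 0 := by
    rw [hAD1, mul_assoc, h1, mul_zero]
  have hBC2 : (B * C) * (B * C) = 0 := by
    calc (B * C) * (B * C) = (B * C * (A * AD)) * (B * C) := by rw [← hBCe]
    _ = (B * C) * ((A * AD) * (B * C)) := by rw [mul_assoc]
    _ = 0 := by rw [heBC, mul_zero]
  have hBDD : B * D * D = 0 := by
    have e : B * D * D = B * D ^ 2 := by noncomm_ring
    rw [e, h4]
  have hA2BC : A * A * (B * C) = 0 := by rw [mul_assoc, h1, mul_zero]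
  -- entries of a * b vanish
  have QR0 : (A * B + B * D) * (C * A + D * C) = 0 := by
    have e : (A * B + B * D) * (C * A + D * C) =
        (A * (B * C)) * A + A * (B * D * C) + (B * D * C) * A + (B * D * D) * C := by
      noncomm_ring
    rw [e, h1, h3, hBDD]
    simp
  have QS0 : (A * B + B * D) * (C * B + D * D) = 0 := by
    have e : (A * B + B * D) * (C * B + D * D) =
        (A * (B * C)) * B + A * (B * D * D) + (B * D * C) * B + (B * D * D) * D := by
      noncomm_ring
    rw [e, h1, h3, hBDD]
    simp
  -- nilpotency of the diagonal pieces
  have hPP : IsNilpotent ((A * A + B * C) - (A * A + B * C) * (A * A + B * C)) := by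
    have ident : (A * A + B * C) - (A * A + B * C) * (A * A + B * C) =
        ((A * A - (A * A) * (A * A)) + (B * C - (B * C) * (A * A)))
          - (A * A * (B * C)) - ((B * C) * (B * C)) := by noncomm_ring
    rw [ident, hA2BC, hBC2, sub_zero, sub_zero]
    apply isNilpotent_add_of_mul_eq_zero_s6
    · have i2 : (A * A - (A * A) * (A * A)) * (B * C - (B * C) * (A * A)) =
          (A * A * (B * C)) * (1 - A * A)
            - (A * A) * ((A * A * (B * C)) * (1 - A * A)) := by noncomm_ring
      rw [i2, hA2BC]
      simp
    · have i3 : (A * A - (A * A) * (A * A)) = (A - A * A) * (A + A * A) := by noncomm_ring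
      have c : (A - A * A) * (A + A * A) = (A + A * A) * (A - A * A) := by noncomm_ring
      have c' : Commute (A - A * A) (A + A * A) := c
      rw [i3]
      exact c'.isNilpotent_mul_right nA
    · refine ⟨2, ?_⟩
      have i4 : (B * C - (B * C) * (A * A)) ^ 2 =
          (B * C) * (B * C) - ((B * C) * (B * C)) * (A * A)
            - (B * C) * (A * A * (B * C)) + (B * C) * ((A * A * (B * C)) * (A * A)) := by
        noncomm_ring
      rw [i4, hBC2, hA2BC]
      simp
  have hCBD2 : (C * B) * (D * D) = 0 := by
    have e : (C * B) * (D * D) = C * (B * D * D) := by noncomm_ring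
    rw [e, hBDD, mul_zero]
  have hCB3 : IsNilpotent (C * B) := by
    refine ⟨3, ?_⟩
    have e : (C * B) ^ 3 = C * (((B * C) * (B * C)) * B) := by noncomm_ring
    rw [e, hBC2]
    simp
  have hSS : IsNilpotent ((C * B + D * D) - (C * B + D * D) * (C * B + D * D)) := by
    have ident : (C * B + D * D) - (C * B + D * D) * (C * B + D * D) =
        ((C * B - (C * B) * (C * B) - (D * D) * (C * B))
          + (D * D - (D * D) * (D * D))) - (C * B) * (D * D) := by noncomm_ring
    rw [ident, hCBD2, sub_zero]
    apply isNilpotent_add_of_mul_eq_zero_s6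
    · have i : (C * B - (C * B) * (C * B) - (D * D) * (C * B)) * (D * D - (D * D) * (D * D)) =
          (1 - C * B - D * D) * (((C * B) * (D * D)) * (1 - D * D)) := by noncomm_ring
      rw [i, hCBD2]
      simp
    · have split : C * B - (C * B) * (C * B) - (D * D) * (C * B) =
          (C * B - (C * B) * (C * B)) + (-((D * D) * (C * B))) := by noncomm_ring
      rw [split]
      apply isNilpotent_add_of_mul_eq_zero_s6
      · have i : (C * B - (C * B) * (C * B)) * ((D * D) * (C * B)) =
            (1 - (C * B)) * (((C * B) * (D * D)) * (C * B)) := by noncomm_ring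
        rw [mul_neg, i, hCBD2]
        simp
      · have i : C * B - (C * B) * (C * B) = (C * B) * (1 - C * B) := by noncomm_ring
        have c : (C * B) * (1 - C * B) = (1 - C * B) * (C * B) := by noncomm_ring
        have c' : Commute (C * B) (1 - C * B) := c
        rw [i]
        exact c'.isNilpotent_mul_right hCB3
      · apply IsNilpotent.neg
        refine ⟨2, ?_⟩
        have i : ((D * D) * (C * B)) ^ 2 = (D * D) * (((C * B) * (D * D)) * (C * B)) := by
          noncomm_ring
        rw [i, hCBD2]
        simp
    · have i : D * D - (D * D) * (D * D) = (D - D * D) * (D + D * D) := by noncomm_ring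
      have c : (D - D * D) * (D + D * D) = (D + D * D) * (D - D * D) := by noncomm_ring
      have c' : Commute (D - D * D) (D + D * D) := c
      rw [i]
      exact c'.isNilpotent_mul_right nD
  -- the matrix pieces
  have hM2 : (!![A, B; C, D] : Matrix (Fin 2) (Fin 2) (X →L[ℂ] X)) * !![A, B; C, D] = !![(A * A + B * C), (A * B + B * D); 0, 0] + !![0, 0; (C * A + D * C), (C * B + D * D)] := by
    rw [Matrix.mul_fin_two, add_fin_two]
    simp
  have hab : (!![(A * A + B * C), (A * B + B * D); 0, 0] : Matrix (Fin 2) (Fin 2) (X →L[ℂ] X)) * !![0, 0; (C * A + D * C), (C * B + D * D)] = 0 := by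
    rw [Matrix.mul_fin_two, QR0, QS0]
    simp [zero_fin_two]
  have nx : IsNilpotent ((!![(A * A + B * C), (A * B + B * D); 0, 0] : Matrix (Fin 2) (Fin 2) (X →L[ℂ] X))
      - !![(A * A + B * C), (A * B + B * D); 0, 0] * !![(A * A + B * C), (A * B + B * D); 0, 0]) := by
    have haa : (!![(A * A + B * C), (A * B + B * D); 0, 0] : Matrix (Fin 2) (Fin 2) (X →L[ℂ] X)) * !![(A * A + B * C), (A * B + B * D); 0, 0] =
        !![(A * A + B * C) * (A * A + B * C), (A * A + B * C) * (A * B + B * D); 0, 0] := by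
      rw [Matrix.mul_fin_two]
      simp
    rw [haa, sub_fin_two]
    simp only [sub_zero]
    exact triu_nilpotent _ _ hPP
  have ny : IsNilpotent ((!![0, 0; (C * A + D * C), (C * B + D * D)] : Matrix (Fin 2) (Fin 2) (X →L[ℂ] X))
      - !![0, 0; (C * A + D * C), (C * B + D * D)] * !![0, 0; (C * A + D * C), (C * B + D * D)]) := by
    have hbb : (!![0, 0; (C * A + D * C), (C * B + D * D)] : Matrix (Fin 2) (Fin 2) (X →L[ℂ] X)) * !![0, 0; (C * A + D * C), (C * B + D * D)] =
        !![0, 0; (C * B + D * D) * (C * A + D * C), (C * B + D * D) * (C * B + D * D)] := by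
      rw [Matrix.mul_fin_two]
      simp
    rw [hbb, sub_fin_two]
    simp only [sub_zero]
    exact tril_nilpotent _ _ hSS
  set Ma : Matrix (Fin 2) (Fin 2) (X →L[ℂ] X) := !![(A * A + B * C), (A * B + B * D); 0, 0] with hMa
  set Mb : Matrix (Fin 2) (Fin 2) (X →L[ℂ] X) := !![0, 0; (C * A + D * C), (C * B + D * D)] with hMb
  set M : Matrix (Fin 2) (Fin 2) (X →L[ℂ] X) := !![A, B; C, D] with hM
  -- nilpotency of M*M - (M*M)*(M*M)
  have hW : M * M - (M * M) * (M * M) = ((Ma - Ma * Ma) + (-(Mb * Ma))) + (Mb - Mb * Mb) := by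
    rw [hM2]
    have e : (Ma + Mb) - (Ma + Mb) * (Ma + Mb) =
        ((Ma - Ma * Ma) + (-(Mb * Ma))) + (Mb - Mb * Mb) - Ma * Mb := by noncomm_ring
    rw [e, hab, sub_zero]
  have hxs : (Ma - Ma * Ma) * (-(Mb * Ma)) = 0 := by
    have i : (Ma - Ma * Ma) * (Mb * Ma) = (Ma * Mb) * Ma - Ma * ((Ma * Mb) * Ma) := by
      noncomm_ring
    rw [mul_neg, i, hab]
    simp
  have hs2 : IsNilpotent (-(Mb * Ma)) := by
    apply IsNilpotent.neg
    refine ⟨2, ?_⟩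
    have i : (Mb * Ma) ^ 2 = Mb * ((Ma * Mb) * Ma) := by noncomm_ring
    rw [i, hab]
    simp
  have hz1 : IsNilpotent ((Ma - Ma * Ma) + (-(Mb * Ma))) :=
    isNilpotent_add_of_mul_eq_zero_s6 hxs nx hs2
  have hz1y : ((Ma - Ma * Ma) + (-(Mb * Ma))) * (Mb - Mb * Mb) = 0 := by
    have i : ((Ma - Ma * Ma) + (-(Mb * Ma))) * (Mb - Mb * Mb) =
        (1 - Ma) * ((Ma * Mb) * (1 - Mb)) - Mb * ((Ma * Mb) * (1 - Mb)) := by noncomm_ring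
    rw [i, hab]
    simp
  have hWnil : IsNilpotent (M * M - (M * M) * (M * M)) := by
    rw [hW]
    exact isNilpotent_add_of_mul_eq_zero_s6 hz1y hz1 ny
  obtain ⟨z', hz'1, hz'2, hz'3, hz'4⟩ := exists_strong_drazin (M * M) hWnil
  have cMM : Commute (M * M) M := (Commute.refl M).mul_left (Commute.refl M)
  have cz'M : Commute z' M := hz'4 M cMM
  refine ⟨M * z', ?_, ?_, ?_⟩
  · rw [mul_assoc, cz'M.eq]
  · have i : (M * z') * M * (M * z') = M * (z' * (M * M) * z') := by noncomm_ring
    rw [i, ← hz'2]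
  · have e : M ^ 2 - M * (M * z') = M * M - (M * M) * z' := by noncomm_ring
    rw [e]
    exact hz'3
end
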